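/- arXiv:1201.5949 — 4 statements merged into one kernel-verified Lean document; each statement's English description precedes it below -/
import Mathlib

section
/- Let α > 0, let p ≠ q be integers, and set λ₁ = (α - 2q)/(2(p - q)) and λ₂ = (2p - α)/(2(p - q)). Define W_r(z) = ((1 - e^{-z})/z)^α · e^{rz} for nonzero complex z. Then λ₁ W_p(z) + λ₂ W_q(z) = 1 + O(z²) as z → 0; that is, there exist constants C > 0 and δ > 0 such that |λ₁ W_p(z) + λ₂ W_q(z) - 1| ≤ C|z|² for all complex z with 0 < |z| < δ. -/
open Complex Filter Topology
open scoped Topology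

noncomputable def Bf : ℂ → ℂ := fun z => if z = 0 then 1 else (1 - Complex.exp (-z)) / z

lemma Bf_zero : Bf 0 = 1 := by simp [Bf]

lemma Bf_ne {z : ℂ} (hz : z ≠ 0) : Bf z = (1 - Complex.exp (-z)) / z := by simp [Bf, hz]

lemma Bf_est {z : ℂ} (hz : z ≠ 0) (h1 : ‖z‖ ≤ 1) :
    ‖(Bf z - 1) / z + 1/2‖ ≤ ‖z‖ := by
  have hb := Complex.exp_bound (x := -z) (by simpa using h1) (n := 3) (by norm_num)
  have hsum : (∑ m ∈ Finset.range 3, (-z) ^ m / m.factorial) = 1 - z + z^2/2 := by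
    simp [Finset.sum_range_succ]
    ring
  rw [hsum] at hb
  have hrw : (Bf z - 1) / z + 1/2 = -((Complex.exp (-z) - (1 - z + z^2/2)) / z^2) := by
    rw [Bf_ne hz]
    field_simp
    ring
  rw [hrw, norm_neg, norm_div, norm_pow]
  rw [div_le_iff₀ (pow_pos (norm_pos_iff.2 hz) 2)]
  calc ‖Complex.exp (-z) - (1 - z + z^2/2)‖
      ≤ ‖-z‖ ^ 3 * ((3:ℕ).succ * (((3:ℕ).factorial : ℝ) * 3)⁻¹) := hb
    _ = ‖z‖ ^ 3 * ((3:ℕ).succ * (((3:ℕ).factorial : ℝ) * 3)⁻¹) := by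
        rw [norm_neg]
    _ ≤ ‖z‖ ^ 3 * 1 := by
        gcongr
        norm_num [Nat.factorial]
    _ = ‖z‖ * ‖z‖ ^ 2 := by ring

lemma Bf_slope : Tendsto (fun z => (Bf z - 1) / z) (𝓝[≠] (0:ℂ)) (𝓝 (-(1/2))) := by
  rw [← tendsto_sub_nhds_zero_iff]
  apply squeeze_zero_norm' (a := fun z => ‖z‖)
  · have h1 : ∀ᶠ z in 𝓝[≠] (0:ℂ), ‖z‖ ≤ 1 :=
      eventually_nhdsWithin_of_eventually_nhds <| by
        filter_upwards [Metric.ball_mem_nhds (0:ℂ) one_pos] with z hz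
        simp only [Metric.mem_ball, Complex.dist_eq, sub_zero] at hz
        exact hz.le
    filter_upwards [h1, self_mem_nhdsWithin] with z h1 hz
    have := Bf_est hz h1
    simpa [sub_neg_eq_add] using this
  · have : Tendsto (fun z : ℂ => ‖z‖) (𝓝 0) (𝓝 0) := by
      simpa using (continuous_norm.tendsto (0:ℂ)).comp tendsto_id
    exact this.mono_left nhdsWithin_le_nhds

lemma Bf_hasDeriv : HasDerivAt Bf (-(1/2)) 0 := by
  rw [hasDerivAt_iff_tendsto_slope]
  have : slope Bf 0 = fun z => (Bf z - 1) / z := by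
    funext z; simp [slope_def_field, Bf_zero]
  rw [this]; exact Bf_slope

lemma Bf_contAt : ContinuousAt Bf 0 := Bf_hasDeriv.continuousAt

lemma Bf_analytic : AnalyticAt ℂ Bf 0 := by
  apply Complex.analyticAt_of_differentiable_on_punctured_nhds_of_continuousAt _ Bf_contAt
  filter_upwards [self_mem_nhdsWithin] with z hz
  have hz' : z ≠ 0 := hz
  have hev : Bf =ᶠ[𝓝 z] fun w => (1 - Complex.exp (-w)) / w :=
    Filter.eventuallyEq_of_mem (isOpen_compl_singleton.mem_nhds hz) fun w hw => Bf_ne hw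
  refine hev.differentiableAt_iff.2 ?_
  exact ((differentiable_const 1).sub ((Complex.differentiable_exp.comp differentiable_neg))).differentiableAt.div differentiableAt_id hz'

theorem WSGD_symbol_expansion (α : ℝ) (hα : 0 < α) (p q : ℤ) (hpq : p ≠ q)
    (l1 l2 : ℝ)
    (hl1 : l1 = (α - 2 * (q : ℝ)) / (2 * ((p : ℝ) - (q : ℝ))))
    (hl2 : l2 = (2 * (p : ℝ) - α) / (2 * ((p : ℝ) - (q : ℝ)))) :
    ∃ C > (0 : ℝ), ∃ δ > (0 : ℝ), ∀ z : ℂ, z ≠ 0 → ‖z‖ < δ →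
      ‖(l1 : ℂ) * (((1 - Complex.exp (-z)) / z) ^ (α : ℂ) * Complex.exp ((p : ℂ) * z))
          + (l2 : ℂ) * (((1 - Complex.exp (-z)) / z) ^ (α : ℂ) * Complex.exp ((q : ℂ) * z)) - 1‖
        ≤ C * ‖z‖ ^ 2 := by
  have hpq' : (p : ℝ) ≠ (q : ℝ) := by exact_mod_cast hpq
  have hden : (2 : ℝ) * ((p : ℝ) - q) ≠ 0 := mul_ne_zero two_ne_zero (sub_ne_zero.2 hpq')
  have hsum : l1 + l2 = 1 := by rw [hl1, hl2]; field_simp; ring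
  have hslope : l1 * p + l2 * q = α / 2 := by
    rw [hl1, hl2]; field_simp; ring
  have hsumC : (l1 : ℂ) + (l2 : ℂ) = 1 := by exact_mod_cast congrArg (Complex.ofReal) hsum
  have hslopeC : (l1 : ℂ) * (p : ℂ) + (l2 : ℂ) * (q : ℂ) = (α : ℂ) / 2 := by
    have := congrArg (Complex.ofReal) hslope
    push_cast at this
    exact_mod_cast hslope
  set L : ℂ → ℂ := fun z => (l1 : ℂ) * Complex.exp ((p : ℂ) * z)
      + (l2 : ℂ) * Complex.exp ((q : ℂ) * z) with hLdef
  set G : ℂ → ℂ := fun z => Bf z ^ (α : ℂ) * L z with hGdef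
  have hL0 : L 0 = 1 := by simp [hLdef, hsumC]
  have hG0 : G 0 = 1 := by simp [hGdef, Bf_zero, hL0]
  have hBone : Bf 0 ∈ Complex.slitPlane := by rw [Bf_zero]; exact Complex.one_mem_slitPlane
  have hGanal : AnalyticAt ℂ G 0 := by
    apply (Bf_analytic.cpow analyticAt_const hBone).mul
    exact (analyticAt_const.mul ((analyticAt_const.mul analyticAt_id).cexp)).add
      (analyticAt_const.mul ((analyticAt_const.mul analyticAt_id).cexp))
  have hexp : ∀ c : ℂ, HasDerivAt (fun z : ℂ => Complex.exp (c * z)) c 0 := by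
    intro c
    have h := ((hasDerivAt_id (0 : ℂ)).const_mul c).cexp
    simpa using h
  have hLd : HasDerivAt L ((l1 : ℂ) * p + (l2 : ℂ) * q) 0 :=
    ((hexp p).const_mul (l1 : ℂ)).add ((hexp q).const_mul (l2 : ℂ))
  have hφ : HasDerivAt (fun z => Bf z ^ (α : ℂ))
      ((α : ℂ) * Bf 0 ^ ((α : ℂ) - 1) * (-(1/2))) 0 := Bf_hasDeriv.cpow_const hBone
  have hGd : HasDerivAt G 0 0 := by
    have h := hφ.mul hLd
    refine h.congr_deriv ?_
    rw [hL0, hslopeC, Bf_zero, Complex.one_cpow, Complex.one_cpow]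
    ring
  obtain ⟨ps, hps⟩ := hGanal
  have hO := hps.isBigO_sub_partialSum_pow 2
  have hpartial : ∀ y : ℂ, ps.partialSum 2 y = 1 := by
    intro y
    have h0 : (ps 0 fun _ => y) = 1 := by rw [hps.coeff_zero]; exact hG0
    have hc1 : ps.coeff 1 = 0 := by
      have hd := hps.deriv
      rw [hGd.deriv] at hd
      exact hd.symm
    have h1 : (ps 1 fun _ => y) = 0 := by
      rw [FormalMultilinearSeries.apply_eq_pow_smul_coeff, hc1, smul_zero]
    rw [FormalMultilinearSeries.partialSum, Finset.sum_range_succ, Finset.sum_range_one, h0, h1]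
    ring
  simp only [zero_add, hpartial] at hO
  obtain ⟨C, hC⟩ := hO.bound
  rw [Metric.eventually_nhds_iff] at hC
  obtain ⟨δ, hδ, hCb⟩ := hC
  refine ⟨max C 1, lt_of_lt_of_le one_pos (le_max_right _ _), δ, hδ, ?_⟩
  intro z hz hzδ
  have hb := hCb (y := z) (by simpa [Complex.dist_eq] using hzδ)
  have hGz : (l1 : ℂ) * (((1 - Complex.exp (-z)) / z) ^ (α : ℂ) * Complex.exp ((p : ℂ) * z))
      + (l2 : ℂ) * (((1 - Complex.exp (-z)) / z) ^ (α : ℂ) * Complex.exp ((q : ℂ) * z)) - 1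
      = G z - 1 := by
    rw [hGdef]
    simp only [hLdef, Bf_ne hz]
    ring
  rw [hGz]
  calc ‖G z - 1‖ ≤ C * ‖‖z‖ ^ 2‖ := hb
    _ ≤ max C 1 * ‖z‖ ^ 2 := by
        have h2 : ‖(‖z‖ ^ 2 : ℝ)‖ = ‖z‖ ^ 2 := by
          rw [Real.norm_of_nonneg (by positivity)]
        rw [h2]
        exact mul_le_mul_of_nonneg_right (le_max_left _ _) (by positivity)
end

section
/- Let α > 0, let p ≠ q be integers, and set λ₁ = (α - 2q)/(2(p - q)) and λ₂ = (2p - α)/(2(p - q)). Then there exists a constant C > 0 such that for every real θ, | λ₁ (1 - e^{-iθ})^α e^{ipθ} + λ₂ (1 - e^{-iθ})^α e^{iqθ} - (iθ)^α | ≤ C |θ|^{α+2}. (This is the Fourier-multiplier form of the statement that the weighted and shifted Grünwald difference operator λ₁ A_{h,p}^α + λ₂ A_{h,q}^α approximates the left Riemann–Liouville derivative of order α with second-order accuracy.) -/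
open Complex Real

noncomputable def Complex.abs : AbsoluteValue ℂ ℝ where
  toFun z := ‖z‖
  map_mul' := norm_mul
  nonneg' := norm_nonneg
  eq_zero' _ := norm_eq_zero
  add_le' := norm_add_le

lemma Complex.norm_eq_abs (z : ℂ) : ‖z‖ = Complex.abs z := rfl

lemma Complex.abs.map_neg (z : ℂ) : Complex.abs (-z) = Complex.abs z := norm_neg z

lemma Complex.abs.nonneg (z : ℂ) : 0 ≤ Complex.abs z := norm_nonneg z

lemma Complex.abs.add_le (z w : ℂ) : Complex.abs (z + w) ≤ Complex.abs z + Complex.abs w :=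
  norm_add_le z w

lemma Complex.abs.sub_le_add (z w : ℂ) : Complex.abs (z - w) ≤ Complex.abs z + Complex.abs w :=
  norm_sub_le z w

lemma Complex.abs_I : Complex.abs Complex.I = 1 := Complex.norm_I

lemma Complex.abs_ofReal (x : ℝ) : Complex.abs (x : ℂ) = |x| := Complex.norm_real x

lemma Complex.abs_two : Complex.abs (2 : ℂ) = 2 := by
  show ‖(2 : ℂ)‖ = 2
  simp

lemma Complex.abs_cpow_real (z : ℂ) (x : ℝ) : Complex.abs (z ^ (x : ℂ)) = Complex.abs z ^ x :=
  Complex.norm_cpow_real z x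

lemma Complex.abs_exp (z : ℂ) : Complex.abs (Complex.exp z) = Real.exp z.re := Complex.norm_exp z

lemma Complex.abs_exp_sub_one_sub_id_le {x : ℂ} (hx : Complex.abs x ≤ 1) :
    Complex.abs (Complex.exp x - 1 - x) ≤ Complex.abs x ^ 2 :=
  Complex.norm_exp_sub_one_sub_id_le hx

private lemma WSGD_mul_cpow {x y : ℂ} (hx : x ≠ 0) (hy : y ≠ 0)
    (h : x.arg + y.arg ∈ Set.Ioc (-Real.pi) Real.pi) (w : ℂ) :
    (x * y) ^ w = x ^ w * y ^ w := by
  rw [Complex.cpow_def_of_ne_zero (mul_ne_zero hx hy) , Complex.cpow_def_of_ne_zero hx,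
    Complex.cpow_def_of_ne_zero hy, Complex.log_mul hx hy h, add_mul, Complex.exp_add]

private lemma WSGD_factor {θ : ℝ} (hθ0 : θ ≠ 0) :
    1 - Complex.exp (-((θ:ℂ) * Complex.I)) =
      ((θ:ℂ) * Complex.I) *
        (((Real.sin (θ/2) / (θ/2) : ℝ) : ℂ) * Complex.exp (-(((θ/2 : ℝ)):ℂ) * Complex.I)) := by
  have h1 : Complex.exp (-(((θ/2:ℝ)):ℂ) * Complex.I) * Complex.exp (-(((θ/2:ℝ)):ℂ) * Complex.I)
      = Complex.exp (-((θ:ℂ) * Complex.I)) := by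
    rw [← Complex.exp_add]; congr 1; push_cast; ring
  have h2 : Complex.exp ((((θ/2:ℝ)):ℂ) * Complex.I) * Complex.exp (-(((θ/2:ℝ)):ℂ) * Complex.I)
      = 1 := by
    rw [← Complex.exp_add]
    norm_num
  have hs : ((Real.sin (θ/2) : ℝ) : ℂ)
      = (Complex.exp (-(((θ/2:ℝ)):ℂ) * Complex.I) - Complex.exp ((((θ/2:ℝ)):ℂ) * Complex.I))
          * Complex.I / 2 := by
    rw [Complex.ofReal_sin]
    simp [Complex.sin]
  have hθC : (θ:ℂ) ≠ 0 := Complex.ofReal_ne_zero.mpr hθ0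
  have hθ2 : ((θ/2 : ℝ) : ℂ) = (θ:ℂ)/2 := by push_cast; ring
  rw [Complex.ofReal_div, hs]
  rw [hθ2] at h1 h2 ⊢
  field_simp
  ring_nf
  simp only [Complex.I_sq]
  ring_nf at h1 h2 ⊢
  linear_combination h1 - h2

private lemma WSGD_sin_div_pos {θ : ℝ} (hθ0 : θ ≠ 0) (hθ1 : |θ| ≤ 1/2) :
    0 < Real.sin (θ/2) / (θ/2) := by
  have h2 := abs_le.mp hθ1
  rcases lt_or_gt_of_ne hθ0 with h | h
  · have : Real.sin (-(θ/2)) > 0 :=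
      Real.sin_pos_of_pos_of_lt_pi (by linarith) (by nlinarith [Real.pi_gt_three])
    rw [Real.sin_neg] at this
    exact div_pos_of_neg_of_neg (by linarith) (by linarith)
  · exact div_pos
      (Real.sin_pos_of_pos_of_lt_pi (by linarith) (by nlinarith [Real.pi_gt_three]))
      (by linarith)

private lemma WSGD_arg_r {θ : ℝ} (hθ0 : θ ≠ 0) (hθ1 : |θ| ≤ 1/2) :
    (((Real.sin (θ/2) / (θ/2) : ℝ) : ℂ) * Complex.exp (-(((θ/2:ℝ)):ℂ) * Complex.I)).arg
      = -(θ/2) := by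
  have h2 := abs_le.mp hθ1
  rw [Complex.arg_real_mul _ (WSGD_sin_div_pos hθ0 hθ1)]
  have : -(((θ/2:ℝ)):ℂ) * Complex.I = (((-(θ/2) : ℝ)):ℂ) * Complex.I := by push_cast; ring
  rw [this, Complex.exp_mul_I,
    Complex.arg_cos_add_sin_mul_I ⟨by nlinarith [Real.pi_gt_three], by nlinarith [Real.pi_gt_three]⟩]

private lemma WSGD_arg_w {θ : ℝ} (hθ0 : θ ≠ 0) :
    ((θ:ℂ) * Complex.I).arg = if 0 < θ then Real.pi/2 else -(Real.pi/2) := by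
  rcases lt_or_gt_of_ne hθ0 with h | h
  · have : (θ:ℂ) * Complex.I = (((-θ : ℝ)):ℂ) * (-Complex.I) := by push_cast; ring
    rw [this, Complex.arg_real_mul _ (by linarith : (0:ℝ) < -θ), Complex.arg_neg_I,
      if_neg (by linarith)]
  · rw [Complex.arg_real_mul _ h, Complex.arg_I, if_pos h]

private lemma WSGD_z_ne {θ : ℝ} (hθ0 : θ ≠ 0) (hθ1 : |θ| ≤ 1/2) :
    1 - Complex.exp (-((θ:ℂ) * Complex.I)) ≠ 0 := by
  intro h
  have h1 : Complex.exp (-((θ:ℂ) * Complex.I)) = 1 := by linear_combination -h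
  rw [Complex.exp_eq_one_iff] at h1
  obtain ⟨n, hn⟩ := h1
  have him := congrArg Complex.im hn
  simp [Complex.mul_im] at him
  -- him : -θ = n * (2*π) (roughly)
  have h2 := abs_le.mp hθ1
  rcases eq_or_ne n 0 with h0 | h0
  · rw [h0] at him; simp at him; exact hθ0 (by linarith)
  · have h3 : (1:ℝ) ≤ |(n:ℝ)| := by exact_mod_cast Int.one_le_abs h0
    have h4 : |(-θ)| = |(n:ℝ)| * (2*π) := by
      rw [him, abs_mul, abs_of_pos (by positivity : (0:ℝ) < 2*π)]
    rw [abs_neg] at h4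
    nlinarith [Real.pi_gt_three, abs_nonneg θ]

private lemma WSGD_split {θ : ℝ} (hθ0 : θ ≠ 0) (hθ1 : |θ| ≤ 1/2) (α : ℝ) :
    (1 - Complex.exp (-((θ:ℂ) * Complex.I))) ^ (α:ℂ)
      = ((θ:ℂ) * Complex.I) ^ (α:ℂ) *
        ((((Real.sin (θ/2) / (θ/2) : ℝ)):ℂ) * Complex.exp (-(((θ/2:ℝ)):ℂ) * Complex.I)) ^ (α:ℂ) := by
  have h2 := abs_le.mp hθ1
  have hw : (θ:ℂ) * Complex.I ≠ 0 := by
    simp [Complex.ofReal_ne_zero.mpr hθ0, Complex.I_ne_zero]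
  have hr : (((Real.sin (θ/2) / (θ/2) : ℝ)):ℂ) * Complex.exp (-(((θ/2:ℝ)):ℂ) * Complex.I) ≠ 0 :=
    mul_ne_zero (Complex.ofReal_ne_zero.mpr (WSGD_sin_div_pos hθ0 hθ1).ne') (Complex.exp_ne_zero _)
  rw [WSGD_factor hθ0, WSGD_mul_cpow hw hr]
  rw [WSGD_arg_w hθ0, WSGD_arg_r hθ0 hθ1]
  constructor
  · rcases lt_or_gt_of_ne hθ0 with h | h
    · rw [if_neg (by linarith)]; nlinarith [Real.pi_gt_three]
    · rw [if_pos h]; nlinarith [Real.pi_gt_three]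
  · rcases lt_or_gt_of_ne hθ0 with h | h
    · rw [if_neg (by linarith)]; nlinarith [Real.pi_gt_three]
    · rw [if_pos h]; nlinarith [Real.pi_gt_three]

private lemma WSGD_r_est {θ : ℝ} (hθ0 : θ ≠ 0) (hθ1 : |θ| ≤ 1/2) :
    Complex.abs ((((Real.sin (θ/2) / (θ/2) : ℝ)):ℂ) * Complex.exp (-(((θ/2:ℝ)):ℂ) * Complex.I)
      - (1 - Complex.I * ((θ:ℂ)/2))) ≤ (2/9) * θ^2 := by
  set r : ℂ := (((Real.sin (θ/2) / (θ/2) : ℝ)):ℂ) * Complex.exp (-(((θ/2:ℝ)):ℂ) * Complex.I)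
    with hr
  set x : ℂ := -((θ:ℂ) * Complex.I) with hx
  have habs_x : Complex.abs x = |θ| := by
    rw [hx, Complex.abs.map_neg, map_mul, Complex.abs_I, Complex.abs_ofReal, mul_one]
  have hsum : (∑ m ∈ Finset.range 3, x ^ m / m.factorial) = 1 + x + x^2/2 := by
    rw [Finset.sum_range_succ, Finset.sum_range_succ, Finset.sum_range_one]
    norm_num
  have hE : Complex.abs (Complex.exp x - (1 + x + x^2/2)) ≤ (2/9) * |θ|^3 := by
    have h := Complex.exp_bound (x := x) (by rw [Complex.norm_eq_abs, habs_x]; linarith) (n := 3) (by norm_num)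
    rw [Complex.norm_eq_abs, Complex.norm_eq_abs, hsum, habs_x] at h
    calc Complex.abs (Complex.exp x - (1 + x + x^2/2))
        ≤ |θ| ^ 3 * ((3).succ * ((3).factorial * (3:ℕ) : ℝ)⁻¹) := h
      _ = (2/9) * |θ|^3 := by norm_num [Nat.factorial]; ring
  have hkey : Complex.exp x - (1 + x + x^2/2)
      = -(((θ:ℂ) * Complex.I) * (r - (1 - Complex.I * ((θ:ℂ)/2)))) := by
    have hf := WSGD_factor hθ0
    rw [hx]
    linear_combination -hf
  have habsw : Complex.abs ((θ:ℂ) * Complex.I) = |θ| := by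
    rw [map_mul, Complex.abs_I, Complex.abs_ofReal, mul_one]
  have hmain : |θ| * Complex.abs (r - (1 - Complex.I * ((θ:ℂ)/2)))
      ≤ |θ| * ((2/9) * θ^2) := by
    rw [← habsw, ← map_mul]
    calc Complex.abs (((θ:ℂ) * Complex.I) * (r - (1 - Complex.I * ((θ:ℂ)/2))))
        = Complex.abs (Complex.exp x - (1 + x + x^2/2)) := by
          rw [hkey, Complex.abs.map_neg]
      _ ≤ (2/9) * |θ|^3 := hE
      _ = Complex.abs ((θ:ℂ) * Complex.I) * ((2/9) * θ^2) := by
          rw [habsw, ← _root_.sq_abs θ]; ring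
  exact le_of_mul_le_mul_left hmain (abs_pos.mpr hθ0)

set_option maxHeartbeats 2000000 in
private lemma WSGD_psi_est {θ α : ℝ} (hα : 0 < α) (hθ0 : θ ≠ 0) (hθ1 : |θ| ≤ 1/2)
    (hαθ : α * |θ| ≤ 1/2) (l1 l2 p q : ℝ)
    (hsum : l1 + l2 = 1) (hmom : l1 * p + l2 * q = α/2)
    (hpθ : |p| * |θ| ≤ 1) (hqθ : |q| * |θ| ≤ 1) :
    Complex.abs (((l1:ℂ) * Complex.exp ((p:ℂ)*(θ:ℂ)*Complex.I)
        + (l2:ℂ) * Complex.exp ((q:ℂ)*(θ:ℂ)*Complex.I))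
        * ((((Real.sin (θ/2) / (θ/2) : ℝ)):ℂ) * Complex.exp (-(((θ/2:ℝ)):ℂ) * Complex.I)) ^ (α:ℂ)
        - 1)
      ≤ (α^2/4 + 2*(α^2+α) + (|l1| * p ^ 2 + |l2| * q ^ 2)*(2+α^2+α)) * θ^2 := by
  have hθsq : θ^2 = |θ| * |θ| := by rw [← _root_.sq_abs θ]; ring
  have hθsq' : θ^2 ≤ |θ| * (1/2) := by rw [hθsq]; gcongr
  have hθ2le : θ^2 ≤ 1/4 := by nlinarith [abs_nonneg θ]
  set r : ℂ := (((Real.sin (θ/2) / (θ/2) : ℝ)):ℂ) * Complex.exp (-(((θ/2:ℝ)):ℂ) * Complex.I)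
    with hrdef
  set A : ℂ := (l1:ℂ) * Complex.exp ((p:ℂ)*(θ:ℂ)*Complex.I)
        + (l2:ℂ) * Complex.exp ((q:ℂ)*(θ:ℂ)*Complex.I) with hAdef
  set u : ℂ := Complex.I * ((α:ℂ) * (θ:ℂ) / 2) with hudef
  have hu_abs : Complex.abs u = α * |θ| / 2 := by
    rw [hudef, map_mul, Complex.abs_I, one_mul, map_div₀, map_mul, Complex.abs_ofReal,
      Complex.abs_ofReal, abs_of_pos hα]
    norm_num [Complex.abs_two]
  have hu14 : Complex.abs u ≤ 1/4 := by rw [hu_abs]; linarith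
  -- r bounds
  have hr_lin := WSGD_r_est hθ0 hθ1
  rw [← hrdef] at hr_lin
  have hr1 : Complex.abs (r - 1) ≤ (3/4) * |θ| := by
    have hsplit : r - 1 = (r - (1 - Complex.I * ((θ:ℂ)/2))) + (-(Complex.I * ((θ:ℂ)/2))) := by
      ring
    rw [hsplit]
    refine le_trans (Complex.abs.add_le _ _) ?_
    have h2 : Complex.abs (-(Complex.I * ((θ:ℂ)/2))) = |θ|/2 := by
      rw [Complex.abs.map_neg, map_mul, Complex.abs_I, one_mul, map_div₀, Complex.abs_ofReal,
        Complex.abs_two]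
    rw [h2]
    nlinarith [abs_nonneg θ, hθsq]
  have hr38 : Complex.abs (r - 1) ≤ 3/8 := by nlinarith [abs_nonneg θ]
  have hr0 : r ≠ 0 := by
    intro h
    rw [h] at hr38
    simp at hr38
    norm_num at hr38
  -- log estimate
  have hlt : ‖r - 1‖ < 1 := by rw [Complex.norm_eq_abs]; linarith
  have h1 := Complex.norm_log_one_add_sub_self_le hlt
  rw [show (1:ℂ) + (r - 1) = r by ring] at h1
  simp only [Complex.norm_eq_abs] at h1
  have hinv : (1 - Complex.abs (r - 1))⁻¹ ≤ 2 := by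
    rw [show (2:ℝ) = (1/2)⁻¹ by norm_num]
    apply inv_anti₀ <;> linarith
  have habs_sq : Complex.abs (r - 1) ^ 2 ≤ (9/16) * θ^2 := by
    rw [hθsq]
    nlinarith [Complex.abs.nonneg (r - 1), abs_nonneg θ]
  have hlog_sub : Complex.abs (Complex.log r - (r - 1)) ≤ (9/16) * θ^2 := by
    have h0 : (0:ℝ) ≤ Complex.abs (r-1) ^ 2 := by positivity
    have hinv0 : (0:ℝ) ≤ (1 - Complex.abs (r - 1))⁻¹ := by
      apply inv_nonneg.mpr; linarith
    have hmul : Complex.abs (r-1) ^ 2 * (1 - Complex.abs (r - 1))⁻¹ ≤ ((9/16) * θ^2) * 2 :=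
      mul_le_mul habs_sq hinv hinv0 (by positivity)
    linarith
  have hlog : Complex.abs (Complex.log r - (-(Complex.I * ((θ:ℂ)/2)))) ≤ θ^2 := by
    have hsplit : Complex.log r - (-(Complex.I * ((θ:ℂ)/2)))
        = (Complex.log r - (r - 1)) + (r - (1 - Complex.I * ((θ:ℂ)/2))) := by ring
    rw [hsplit]
    refine le_trans (Complex.abs.add_le _ _) ?_
    nlinarith [sq_nonneg θ, hr_lin, hlog_sub]
  -- v := log r * α
  set v : ℂ := Complex.log r * (α:ℂ) with hvdef
  have hv_lin : Complex.abs (v - (-u)) ≤ α * θ^2 := by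
    have hid : v - (-u) = (α:ℂ) * (Complex.log r - (-(Complex.I * ((θ:ℂ)/2)))) := by
      rw [hvdef, hudef]; push_cast; ring
    rw [hid, map_mul, Complex.abs_ofReal, abs_of_pos hα]
    exact mul_le_mul_of_nonneg_left hlog hα.le
  have hv_abs : Complex.abs v ≤ α * |θ| := by
    have hsplit : v = -u + (v - (-u)) := by ring
    rw [hsplit]
    refine le_trans (Complex.abs.add_le _ _) ?_
    rw [Complex.abs.map_neg, hu_abs]
    nlinarith [abs_nonneg θ, hα.le]
  have hv_half : Complex.abs v ≤ 1/2 := le_trans hv_abs hαθ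
  have hBexp : r ^ ((α:ℝ):ℂ) = Complex.exp v := by
    rw [Complex.cpow_def_of_ne_zero hr0, hvdef]
  have hB_lin : Complex.abs (r ^ ((α:ℝ):ℂ) - (1 - u)) ≤ (α^2 + α) * θ^2 := by
    rw [hBexp]
    have hsplit : Complex.exp v - (1 - u) = (Complex.exp v - 1 - v) + (v - (-u)) := by ring
    rw [hsplit]
    refine le_trans (Complex.abs.add_le _ _) ?_
    have he := Complex.abs_exp_sub_one_sub_id_le (x := v) (by linarith)
    have hv2 : Complex.abs v ^ 2 ≤ α^2 * θ^2 := by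
      rw [hθsq]
      nlinarith [Complex.abs.nonneg v, abs_nonneg θ, hα.le]
    nlinarith
  -- A estimate
  have hsC : (l1:ℂ) + (l2:ℂ) = 1 := by exact_mod_cast hsum
  have hmC : (l1:ℂ)*(p:ℂ) + (l2:ℂ)*(q:ℂ) = (α:ℂ)/2 := by exact_mod_cast hmom
  have hA_lin : Complex.abs (A - (1 + u)) ≤ (|l1| * p ^ 2 + |l2| * q ^ 2) * θ^2 := by
    have hAid : A - (1 + u)
        = (l1:ℂ) * (Complex.exp ((p:ℂ)*(θ:ℂ)*Complex.I) - 1 - (p:ℂ)*(θ:ℂ)*Complex.I)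
          + (l2:ℂ) * (Complex.exp ((q:ℂ)*(θ:ℂ)*Complex.I) - 1 - (q:ℂ)*(θ:ℂ)*Complex.I) := by
      rw [hAdef, hudef]
      linear_combination hsC + (θ:ℂ)*Complex.I*hmC
    rw [hAid]
    refine le_trans (Complex.abs.add_le _ _) ?_
    rw [map_mul, map_mul, Complex.abs_ofReal, Complex.abs_ofReal]
    have habsp : Complex.abs ((p:ℂ)*(θ:ℂ)*Complex.I) = |p| * |θ| := by
      rw [map_mul, map_mul, Complex.abs_I, Complex.abs_ofReal, Complex.abs_ofReal, mul_one]
    have habsq : Complex.abs ((q:ℂ)*(θ:ℂ)*Complex.I) = |q| * |θ| := by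
      rw [map_mul, map_mul, Complex.abs_I, Complex.abs_ofReal, Complex.abs_ofReal, mul_one]
    have hep := Complex.abs_exp_sub_one_sub_id_le (x := (p:ℂ)*(θ:ℂ)*Complex.I)
      (by rw [habsp]; exact hpθ)
    have heq := Complex.abs_exp_sub_one_sub_id_le (x := (q:ℂ)*(θ:ℂ)*Complex.I)
      (by rw [habsq]; exact hqθ)
    rw [habsp] at hep
    rw [habsq] at heq
    have hp2 : (|p| * |θ|)^2 = p^2 * θ^2 := by
      rw [← _root_.sq_abs p, ← _root_.sq_abs θ]; ring
    have hq2 : (|q| * |θ|)^2 = q^2 * θ^2 := by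
      rw [← _root_.sq_abs q, ← _root_.sq_abs θ]; ring
    rw [hp2] at hep
    rw [hq2] at heq
    nlinarith [abs_nonneg l1, abs_nonneg l2, sq_nonneg θ, sq_nonneg p, sq_nonneg q,
      Complex.abs.nonneg (Complex.exp ((p:ℂ)*(θ:ℂ)*Complex.I) - 1 - (p:ℂ)*(θ:ℂ)*Complex.I),
      Complex.abs.nonneg (Complex.exp ((q:ℂ)*(θ:ℂ)*Complex.I) - 1 - (q:ℂ)*(θ:ℂ)*Complex.I)]
  -- combine
  set B : ℂ := r ^ ((α:ℝ):ℂ) with hBdef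
  have hB_abs : Complex.abs B ≤ 2 + (α^2 + α) := by
    have hsplit : B = (1 - u) + (B - (1 - u)) := by ring
    rw [hsplit]
    refine le_trans (Complex.abs.add_le _ _) ?_
    have h1u : Complex.abs (1 - u) ≤ 1 + 1/4 := by
      refine le_trans (Complex.abs.sub_le_add _ _) ?_
      simp only [map_one]
      linarith
    nlinarith [sq_nonneg θ, hα.le]
  have hfinal : A * B - 1 = -u^2 + (1 + u) * (B - (1 - u)) + (A - (1 + u)) * B := by ring
  rw [hfinal]
  refine le_trans (Complex.abs.add_le _ _) ?_
  refine le_trans (add_le_add_left (Complex.abs.add_le _ _) _) ?_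
  have t1 : Complex.abs (-u^2) ≤ α^2/4 * θ^2 := by
    rw [Complex.abs.map_neg, map_pow, hu_abs, hθsq]
    nlinarith [abs_nonneg θ, hα.le]
  have t2 : Complex.abs ((1 + u) * (B - (1 - u))) ≤ 2 * ((α^2+α) * θ^2) := by
    rw [map_mul]
    have h1u : Complex.abs (1 + u) ≤ 2 := by
      refine le_trans (Complex.abs.add_le _ _) ?_
      simp only [map_one]
      linarith
    exact mul_le_mul h1u hB_lin (Complex.abs.nonneg _) (by norm_num)
  have t3 : Complex.abs ((A - (1 + u)) * B)
      ≤ ((|l1| * p ^ 2 + |l2| * q ^ 2) * θ^2) * (2 + (α^2 + α)) := by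
    rw [map_mul]
    exact mul_le_mul hA_lin hB_abs (Complex.abs.nonneg _)
      (by positivity : (0:ℝ) ≤ (|l1| * p ^ 2 + |l2| * q ^ 2) * θ^2)
  nlinarith [t1, t2, t3, sq_nonneg θ, abs_nonneg l1, abs_nonneg l2, sq_nonneg p, sq_nonneg q]

set_option maxHeartbeats 2000000 in
theorem WSGD_second_order_multiplier (α : ℝ) (hα : 0 < α) (p q : ℤ) (hpq : p ≠ q)
    (l1 l2 : ℝ)
    (hl1 : l1 = (α - 2 * (q : ℝ)) / (2 * ((p : ℝ) - (q : ℝ))))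
    (hl2 : l2 = (2 * (p : ℝ) - α) / (2 * ((p : ℝ) - (q : ℝ)))) :
    ∃ C > (0 : ℝ), ∀ θ : ℝ,
      ‖(l1 : ℂ) * (1 - Complex.exp (-((θ : ℂ) * Complex.I))) ^ (α : ℂ)
            * Complex.exp ((p : ℂ) * (θ : ℂ) * Complex.I)
          + (l2 : ℂ) * (1 - Complex.exp (-((θ : ℂ) * Complex.I))) ^ (α : ℂ)
            * Complex.exp ((q : ℂ) * (θ : ℂ) * Complex.I)
          - ((θ : ℂ) * Complex.I) ^ (α : ℂ)‖
        ≤ C * |θ| ^ (α + 2) := by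
  have hpq' : (p:ℝ) - (q:ℝ) ≠ 0 := sub_ne_zero.mpr (by exact_mod_cast hpq)
  have hsum : l1 + l2 = 1 := by rw [hl1, hl2]; field_simp; ring
  have hmom : l1 * (p:ℝ) + l2 * (q:ℝ) = α/2 := by rw [hl1, hl2]; field_simp; ring
  set P : ℝ := 2*(|(p:ℝ)| + |(q:ℝ)| + α + 1) with hP
  have hP2 : 2 ≤ P := by
    have h1 := abs_nonneg (p:ℝ); have h2 := abs_nonneg (q:ℝ); nlinarith
  have hP0 : 0 < P := by linarith
  have hPp : 2 * |(p:ℝ)| ≤ P := by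
    have h2 := abs_nonneg (q:ℝ); nlinarith
  have hPq : 2 * |(q:ℝ)| ≤ P := by
    have h1 := abs_nonneg (p:ℝ); nlinarith
  have hPα : 2 * α ≤ P := by
    have h1 := abs_nonneg (p:ℝ); have h2 := abs_nonneg (q:ℝ); nlinarith
  set δ : ℝ := 1/P with hδ
  have hδ0 : 0 < δ := by positivity
  have hδhalf : δ ≤ 1/2 := by
    rw [hδ, div_le_div_iff₀ hP0 (by norm_num : (0:ℝ) < 2)]; linarith
  set KA : ℝ := |l1| * (p:ℝ)^2 + |l2| * (q:ℝ)^2 with hKA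
  set K : ℝ := α^2/4 + 2*(α^2+α) + KA*(2+(α^2+α)) with hK
  set C2 : ℝ := (|l1| + |l2|) * 2 ^ α / δ ^ (α+2) + 1/δ^2 with hC2
  have hK0 : 0 ≤ K := by positivity
  have hC20 : 0 ≤ C2 := by positivity
  refine ⟨K + C2 + 1, by positivity, fun θ => ?_⟩
  rw [Complex.norm_eq_abs]
  have hαC : ((α:ℝ):ℂ) ≠ 0 := by exact_mod_cast hα.ne'
  rcases eq_or_ne θ 0 with rfl | hθ0
  · simp [Complex.zero_cpow hαC, Real.zero_rpow (by positivity : α+2 ≠ 0)]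
  have habsθ : 0 < |θ| := abs_pos.mpr hθ0
  have hwabs : Complex.abs ((θ:ℂ) * Complex.I) = |θ| := by
    rw [map_mul, Complex.abs_I, Complex.abs_ofReal, mul_one]
  have hwα : Complex.abs (((θ:ℂ) * Complex.I) ^ ((α:ℝ):ℂ)) = |θ| ^ α := by
    rw [Complex.abs_cpow_real, hwabs]
  have hrpow2 : |θ| ^ ((2:ℝ)) = θ^2 := by
    rw [show ((2:ℝ)) = ((2:ℕ):ℝ) by norm_num, Real.rpow_natCast, _root_.sq_abs]
  have hrpow_add : |θ| ^ (α + 2) = |θ| ^ α * θ^2 := by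
    rw [Real.rpow_add habsθ, hrpow2]
  rcases le_or_gt |θ| δ with hnear | hfar
  · -- near zero
    have hθhalf : |θ| ≤ 1/2 := le_trans hnear hδhalf
    have hαθ : α * |θ| ≤ 1/2 := by
      have h1 : α * |θ| ≤ α * δ := mul_le_mul_of_nonneg_left hnear hα.le
      have h2 : α * δ ≤ 1/2 := by
        rw [hδ, mul_one_div, div_le_div_iff₀ hP0 (by norm_num : (0:ℝ) < 2)]; linarith
      linarith
    have hpθ : |(p:ℝ)| * |θ| ≤ 1 := by
      have h1 : |(p:ℝ)| * |θ| ≤ |(p:ℝ)| * δ := mul_le_mul_of_nonneg_left hnear (abs_nonneg _)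
      have h2 : |(p:ℝ)| * δ ≤ 1/2 := by
        rw [hδ, mul_one_div, div_le_div_iff₀ hP0 (by norm_num : (0:ℝ) < 2)]; linarith
      linarith
    have hqθ : |(q:ℝ)| * |θ| ≤ 1 := by
      have h1 : |(q:ℝ)| * |θ| ≤ |(q:ℝ)| * δ := mul_le_mul_of_nonneg_left hnear (abs_nonneg _)
      have h2 : |(q:ℝ)| * δ ≤ 1/2 := by
        rw [hδ, mul_one_div, div_le_div_iff₀ hP0 (by norm_num : (0:ℝ) < 2)]; linarith
      linarith
    have hsplit := WSGD_split hθ0 hθhalf α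
    have hEid : (l1 : ℂ) * (1 - Complex.exp (-((θ : ℂ) * Complex.I))) ^ ((α:ℝ) : ℂ)
            * Complex.exp ((p : ℂ) * (θ : ℂ) * Complex.I)
          + (l2 : ℂ) * (1 - Complex.exp (-((θ : ℂ) * Complex.I))) ^ ((α:ℝ) : ℂ)
            * Complex.exp ((q : ℂ) * (θ : ℂ) * Complex.I)
          - ((θ : ℂ) * Complex.I) ^ ((α:ℝ) : ℂ)
        = ((θ:ℂ) * Complex.I) ^ ((α:ℝ):ℂ) *
          (((l1:ℂ) * Complex.exp ((((p:ℝ)):ℂ)*(θ:ℂ)*Complex.I)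
            + (l2:ℂ) * Complex.exp ((((q:ℝ)):ℂ)*(θ:ℂ)*Complex.I))
            * ((((Real.sin (θ/2) / (θ/2) : ℝ)):ℂ)
                * Complex.exp (-(((θ/2:ℝ)):ℂ) * Complex.I)) ^ ((α:ℝ):ℂ)
            - 1) := by
      rw [hsplit]
      push_cast
      ring
    rw [hEid, map_mul, hwα]
    have hpsi := WSGD_psi_est hα hθ0 hθhalf hαθ l1 l2 (p:ℝ) (q:ℝ) hsum hmom hpθ hqθ
    calc |θ| ^ α * Complex.abs _ ≤ |θ| ^ α * (K * θ^2) := by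
          apply mul_le_mul_of_nonneg_left _ (Real.rpow_nonneg (abs_nonneg θ) α)
          refine le_trans hpsi (le_of_eq ?_)
          rw [hK, hKA]; ring
      _ = K * |θ| ^ (α+2) := by rw [hrpow_add]; ring
      _ ≤ (K + C2 + 1) * |θ| ^ (α+2) := by
          apply mul_le_mul_of_nonneg_right _ (Real.rpow_nonneg (abs_nonneg θ) _)
          linarith
  · -- far from zero
    have hz2 : Complex.abs (1 - Complex.exp (-((θ:ℂ) * Complex.I))) ≤ 2 := by
      refine le_trans (Complex.abs.sub_le_add _ _) ?_
      have : Complex.abs (Complex.exp (-((θ:ℂ) * Complex.I))) = 1 := by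
        rw [Complex.abs_exp]
        simp
      rw [this, map_one]
      norm_num
    have hzα : Complex.abs ((1 - Complex.exp (-((θ:ℂ) * Complex.I))) ^ ((α:ℝ):ℂ)) ≤ 2 ^ α := by
      rw [Complex.abs_cpow_real]
      exact Real.rpow_le_rpow (Complex.abs.nonneg _) hz2 hα.le
    have hep : Complex.abs (Complex.exp ((p:ℂ) * (θ:ℂ) * Complex.I)) = 1 := by
      rw [Complex.abs_exp]; simp
    have heq : Complex.abs (Complex.exp ((q:ℂ) * (θ:ℂ) * Complex.I)) = 1 := by
      rw [Complex.abs_exp]; simp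
    have htri : Complex.abs ((l1 : ℂ) * (1 - Complex.exp (-((θ : ℂ) * Complex.I))) ^ ((α:ℝ) : ℂ)
            * Complex.exp ((p : ℂ) * (θ : ℂ) * Complex.I)
          + (l2 : ℂ) * (1 - Complex.exp (-((θ : ℂ) * Complex.I))) ^ ((α:ℝ) : ℂ)
            * Complex.exp ((q : ℂ) * (θ : ℂ) * Complex.I)
          - ((θ : ℂ) * Complex.I) ^ ((α:ℝ) : ℂ))
        ≤ (|l1| + |l2|) * 2 ^ α + |θ| ^ α := by
      refine le_trans (Complex.abs.sub_le_add _ _) ?_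
      rw [hwα]
      refine add_le_add_left ?_ _
      refine le_trans (Complex.abs.add_le _ _) ?_
      rw [map_mul, map_mul, map_mul, map_mul, hep, heq, Complex.abs_ofReal, Complex.abs_ofReal,
        mul_one, mul_one]
      have h2α : (0:ℝ) ≤ 2 ^ α := Real.rpow_nonneg (by norm_num) α
      nlinarith [abs_nonneg l1, abs_nonneg l2, Complex.abs.nonneg
        ((1 - Complex.exp (-((θ:ℂ) * Complex.I))) ^ ((α:ℝ):ℂ)), hzα,
        mul_le_mul_of_nonneg_left hzα (abs_nonneg l1),
        mul_le_mul_of_nonneg_left hzα (abs_nonneg l2)]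
    refine le_trans htri ?_
    have hδθ : δ ^ (α+2) ≤ |θ| ^ (α+2) :=
      Real.rpow_le_rpow hδ0.le hfar.le (by positivity)
    have hT0 : 0 < |θ| ^ (α+2) := Real.rpow_pos_of_pos habsθ _
    have hδT : δ ^ (α + 2) > 0 := Real.rpow_pos_of_pos hδ0 _
    have h2α : (0:ℝ) ≤ (|l1| + |l2|) * 2 ^ α := by positivity
    have hpart1 : (|l1| + |l2|) * 2 ^ α
        ≤ (|l1| + |l2|) * 2 ^ α / δ ^ (α+2) * |θ| ^ (α+2) := by
      rw [div_mul_eq_mul_div, le_div_iff₀ hδT]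
      exact mul_le_mul_of_nonneg_left hδθ h2α
    have hpart2 : |θ| ^ α ≤ 1/δ^2 * |θ| ^ (α+2) := by
      have hδθ2 : δ^2 ≤ θ^2 := by
        rw [← _root_.sq_abs θ]
        exact pow_le_pow_left₀ hδ0.le hfar.le 2
      have hαn : 0 ≤ |θ| ^ α := Real.rpow_nonneg (abs_nonneg θ) α
      rw [hrpow_add]
      calc |θ| ^ α = 1/δ^2 * (|θ| ^ α * δ^2) := by field_simp
        _ ≤ 1/δ^2 * (|θ| ^ α * θ^2) := by
            apply mul_le_mul_of_nonneg_left _ (by positivity : (0:ℝ) ≤ 1/δ^2)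
            exact mul_le_mul_of_nonneg_left hδθ2 hαn
    calc (|l1| + |l2|) * 2 ^ α + |θ| ^ α
        ≤ (|l1| + |l2|) * 2 ^ α / δ ^ (α+2) * |θ| ^ (α+2) + 1/δ^2 * |θ| ^ (α+2) :=
          add_le_add hpart1 hpart2
      _ = C2 * |θ| ^ (α+2) := by rw [hC2]; ring
      _ ≤ (K + C2 + 1) * |θ| ^ (α+2) := by
          apply mul_le_mul_of_nonneg_right _ hT0.le
          linarith
end

section
/- Let α > 0 and let p, q, r be pairwise distinct integers. Set λ₁ = (12qr - (6q+6r+1)α + 3α²)/(12(qr - pq - pr + p²)), λ₂ = (12pr - (6p+6r+1)α + 3α²)/(12(pr - pq - qr + q²)), λ₃ = (12pq - (6p+6q+1)α + 3α²)/(12(pq - pr - qr + r²)). Then there exists a constant C > 0 such that for every real θ, | λ₁ (1 - e^{-iθ})^α e^{ipθ} + λ₂ (1 - e^{-iθ})^α e^{iqθ} + λ₃ (1 - e^{-iθ})^α e^{irθ} - (iθ)^α | ≤ C |θ|^{α+3}. (This is the Fourier-multiplier form of the statement that the 3-WSGD operator λ₁ A_{h,p}^α + λ₂ A_{h,q}^α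 + λ₃ A_{h,r}^α approximates the left Riemann–Liouville derivative of order α with third-order accuracy.) -/
open Complex Filter Asymptotics

noncomputable def PsiW : ℂ → ℂ := fun z => if z = 0 then 1 else (1 - Complex.exp (-z)) / z

lemma psiW_zero : PsiW 0 = 1 := by simp [PsiW]

lemma psiW_key (z : ℂ) : z * PsiW z = 1 - Complex.exp (-z) := by
  by_cases h : z = 0
  · simp [h, PsiW]
  · simp only [PsiW, if_neg h]; field_simp

lemma psiW_eventuallyEq {z : ℂ} (hz : z ≠ 0) :
    PsiW =ᶠ[nhds z] fun w => (1 - Complex.exp (-w)) / w := by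
  filter_upwards [isOpen_ne.mem_nhds hz] with w hw
  simp [PsiW, hw]

lemma psiW_tendsto : Tendsto PsiW (nhds 0) (nhds 1) := by
  have hd : HasDerivAt (fun w : ℂ => Complex.exp (-w)) (-1) 0 := by
    simpa [Function.comp_def] using ((Complex.hasDerivAt_exp (-0)).comp 0 ((hasDerivAt_id (0:ℂ)).neg))
  have h1 : Tendsto (fun w : ℂ => (Complex.exp (-w) - 1) / w) (nhdsWithin 0 {(0:ℂ)}ᶜ) (nhds (-1)) := by
    rw [hasDerivAt_iff_tendsto_slope] at hd
    refine hd.congr fun w => ?_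
    simp [slope_def_field, Complex.exp_zero]
  have h2 : Tendsto PsiW (nhdsWithin 0 {(0:ℂ)}ᶜ) (nhds 1) := by
    have key : Tendsto (fun w : ℂ => -((Complex.exp (-w) - 1) / w)) (nhdsWithin 0 {(0:ℂ)}ᶜ) (nhds 1) := by
      simpa using h1.neg
    refine key.congr' ?_
    filter_upwards [self_mem_nhdsWithin] with w hw
    have hw' : w ≠ 0 := hw
    simp only [PsiW, if_neg hw']
    ring
  rw [← nhdsNE_sup_pure 0]
  refine Tendsto.sup h2 ?_
  simpa [psiW_zero] using tendsto_pure_nhds PsiW 0 |>.congr (fun _ => rfl)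

lemma psiW_analyticAt (z : ℂ) : AnalyticAt ℂ PsiW z := by
  by_cases hz : z = 0
  · subst hz
    apply Complex.analyticAt_of_differentiable_on_punctured_nhds_of_continuousAt
    · filter_upwards [self_mem_nhdsWithin] with w hw
      have hw' : (w : ℂ) ≠ 0 := hw
      have : DifferentiableAt ℂ (fun u : ℂ => (1 - Complex.exp (-u)) / u) w := by
        apply DifferentiableAt.div
        · exact (differentiable_const 1).differentiableAt.sub ((Complex.differentiable_exp.comp differentiable_neg).differentiableAt)
        · exact differentiableAt_fun_id
        · exact hw'
      exact this.congr_of_eventuallyEq (psiW_eventuallyEq hw')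
    · rw [ContinuousAt, psiW_zero]; exact psiW_tendsto
  · have h : AnalyticAt ℂ (fun u : ℂ => (1 - Complex.exp (-u)) / u) z := by
      apply AnalyticAt.div
      · exact (analyticAt_const (v := (1:ℂ))).sub ((analyticAt_cexp.comp (analyticAt_id.neg)))
      · exact analyticAt_id
      · exact hz
    exact h.congr (psiW_eventuallyEq hz).symm


lemma psiW_analyticOnNhd : AnalyticOnNhd ℂ PsiW Set.univ := fun z _ => psiW_analyticAt z

lemma derivPsiW_analyticAt (z : ℂ) : AnalyticAt ℂ (deriv PsiW) z :=
  (psiW_analyticOnNhd.deriv) z trivial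

lemma deriv2PsiW_analyticAt (z : ℂ) : AnalyticAt ℂ (deriv (deriv PsiW)) z :=
  ((psiW_analyticOnNhd.deriv).deriv) z trivial

lemma psiW_hasDerivAt (z : ℂ) : HasDerivAt PsiW (deriv PsiW z) z :=
  (psiW_analyticAt z).differentiableAt.hasDerivAt

lemma derivPsiW_hasDerivAt (z : ℂ) : HasDerivAt (deriv PsiW) (deriv (deriv PsiW) z) z :=
  (derivPsiW_analyticAt z).differentiableAt.hasDerivAt

lemma deriv2PsiW_hasDerivAt (z : ℂ) : HasDerivAt (deriv (deriv PsiW)) (deriv (deriv (deriv PsiW)) z) z :=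
  (deriv2PsiW_analyticAt z).differentiableAt.hasDerivAt

lemma exp_neg_hasDerivAt (z : ℂ) : HasDerivAt (fun w : ℂ => Complex.exp (-w)) (-Complex.exp (-z)) z := by
  simpa [Function.comp_def] using ((Complex.hasDerivAt_exp (-z)).comp z ((hasDerivAt_id z).neg))

lemma psiW_H2 (z : ℂ) : PsiW z + z * deriv PsiW z = Complex.exp (-z) := by
  have h1 : HasDerivAt (fun w : ℂ => w * PsiW w) (PsiW z + z * deriv PsiW z) z := by
    simpa [mul_comm] using (hasDerivAt_id z).fun_mul (psiW_hasDerivAt z)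
  have h2 : HasDerivAt (fun w : ℂ => 1 - Complex.exp (-w)) (Complex.exp (-z)) z := by
    simpa using ((exp_neg_hasDerivAt z).const_sub 1)
  have he : (fun w : ℂ => w * PsiW w) = fun w : ℂ => 1 - Complex.exp (-w) := funext psiW_key
  rw [he] at h1
  exact h1.unique h2

lemma psiW_H3 (z : ℂ) : 2 * deriv PsiW z + z * deriv (deriv PsiW) z = -Complex.exp (-z) := by
  have h1 : HasDerivAt (fun w : ℂ => PsiW w + w * deriv PsiW w)
      (deriv PsiW z + (deriv PsiW z + z * deriv (deriv PsiW) z)) z := by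
    have := (psiW_hasDerivAt z).fun_add (((hasDerivAt_id z).fun_mul (derivPsiW_hasDerivAt z)))
    simpa [mul_comm] using this
  have h2 : HasDerivAt (fun w : ℂ => Complex.exp (-w)) (-Complex.exp (-z)) z := exp_neg_hasDerivAt z
  have he : (fun w : ℂ => PsiW w + w * deriv PsiW w) = fun w : ℂ => Complex.exp (-w) := funext psiW_H2
  rw [he] at h1
  have := h1.unique h2
  linear_combination this

lemma psiW_H4 (z : ℂ) : 3 * deriv (deriv PsiW) z + z * deriv (deriv (deriv PsiW)) z = Complex.exp (-z) := by
  have h1 : HasDerivAt (fun w : ℂ => 2 * deriv PsiW w + w * deriv (deriv PsiW) w)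
      (2 * deriv (deriv PsiW) z + (deriv (deriv PsiW) z + z * deriv (deriv (deriv PsiW)) z)) z := by
    have := ((derivPsiW_hasDerivAt z).const_mul (2:ℂ)).fun_add ((hasDerivAt_id z).fun_mul (deriv2PsiW_hasDerivAt z))
    simpa [mul_comm] using this
  have h2 : HasDerivAt (fun w : ℂ => -Complex.exp (-w)) (Complex.exp (-z)) z := by
    simpa using (exp_neg_hasDerivAt z).fun_neg
  have he : (fun w : ℂ => 2 * deriv PsiW w + w * deriv (deriv PsiW) w) = fun w : ℂ => -Complex.exp (-w) :=
    funext psiW_H3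
  rw [he] at h1
  have := h1.unique h2
  linear_combination this

lemma derivPsiW_zero : deriv PsiW 0 = -(1/2) := by
  have := psiW_H3 0; simp at this; linear_combination this / 2

lemma deriv2PsiW_zero : deriv (deriv PsiW) 0 = 1/3 := by
  have := psiW_H4 0; simp at this; linear_combination this / 3


section main
variable (α a b c k1 k2 k3 : ℂ)

lemma key_bigO (h0 : a + b + c = 1) (h1 : a*k1 + b*k2 + c*k3 = α/2)
    (h2 : a*k1^2 + b*k2^2 + c*k3^2 = α^2/4 - α/12) :
    (fun z : ℂ => (a * Complex.exp (k1*z) + b * Complex.exp (k2*z) + c * Complex.exp (k3*z))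
      * Complex.exp (α * Complex.log (PsiW z)) - 1) =O[nhds 0] fun z => ‖z‖^3 := by
  set G : ℂ → ℂ := fun z => Complex.exp (α * Complex.log (PsiW z)) with hG
  set T : ℂ → ℂ := fun z => a * Complex.exp (k1*z) + b * Complex.exp (k2*z) + c * Complex.exp (k3*z) with hT
  set T' : ℂ → ℂ := fun z => a * k1 * Complex.exp (k1*z) + b * k2 * Complex.exp (k2*z) + c * k3 * Complex.exp (k3*z) with hT'
  set F : ℂ → ℂ := fun z => T z * G z - 1 with hF
  set U : Set ℂ := PsiW ⁻¹' Complex.slitPlane with hU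
  have hpsiCont : Continuous PsiW := continuous_iff_continuousAt.2 fun z => (psiW_analyticAt z).continuousAt
  have hUopen : IsOpen U := Complex.isOpen_slitPlane.preimage hpsiCont
  have h0U : (0 : ℂ) ∈ U := by
    simp only [hU, Set.mem_preimage, psiW_zero]
    exact Complex.one_mem_slitPlane
  have hUnhds : U ∈ nhds (0 : ℂ) := hUopen.mem_nhds h0U
  -- derivative of G on U
  have hGd : ∀ z ∈ U, HasDerivAt G (α * (deriv PsiW z / PsiW z) * G z) z := by
    intro z hz
    have hlog : HasDerivAt (fun w => Complex.log (PsiW w)) ((PsiW z)⁻¹ * deriv PsiW z) z :=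
      (Complex.hasDerivAt_log hz).comp z (psiW_hasDerivAt z)
    have := ((hlog.const_mul α).cexp : HasDerivAt (fun w => Complex.exp (α * Complex.log (PsiW w)))
      (Complex.exp (α * Complex.log (PsiW z)) * (α * ((PsiW z)⁻¹ * deriv PsiW z))) z)
    refine this.congr_deriv ?_
    simp only [hG]
    field_simp
  have hTd : ∀ z : ℂ, HasDerivAt T (T' z) z := by
    intro z
    have h1 : HasDerivAt (fun w : ℂ => Complex.exp (k1 * w)) (k1 * Complex.exp (k1 * z)) z := by
      simpa [mul_comm, Function.comp_def] using (Complex.hasDerivAt_exp (k1*z)).comp z ((hasDerivAt_id z).const_mul k1)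
    have h2 : HasDerivAt (fun w : ℂ => Complex.exp (k2 * w)) (k2 * Complex.exp (k2 * z)) z := by
      simpa [mul_comm, Function.comp_def] using (Complex.hasDerivAt_exp (k2*z)).comp z ((hasDerivAt_id z).const_mul k2)
    have h3 : HasDerivAt (fun w : ℂ => Complex.exp (k3 * w)) (k3 * Complex.exp (k3 * z)) z := by
      simpa [mul_comm, Function.comp_def] using (Complex.hasDerivAt_exp (k3*z)).comp z ((hasDerivAt_id z).const_mul k3)
    have := ((h1.const_mul a).fun_add (h2.const_mul b)).fun_add (h3.const_mul c)
    refine this.congr_deriv ?_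
    simp only [hT']; ring
  have hFd : ∀ z ∈ U, HasDerivAt F (T' z * G z + T z * (α * (deriv PsiW z / PsiW z) * G z)) z := by
    intro z hz
    exact ((hTd z).mul (hGd z hz)).sub_const 1
  -- values at zero
  have hPsi0 : PsiW 0 = 1 := psiW_zero
  have hG0 : G 0 = 1 := by simp [hG, hPsi0]
  have hT0 : T 0 = a + b + c := by simp [hT]
  have hT'0 : T' 0 = a*k1 + b*k2 + c*k3 := by simp [hT']
  have hF0 : F 0 = 0 := by
    simp only [hF, hT0, hG0, mul_one, h0, sub_self]
  have hdF0 : deriv F 0 = 0 := by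
    rw [(hFd 0 h0U).deriv, hT'0, hT0, hG0, hPsi0, derivPsiW_zero, h0, h1]
    ring
  -- second derivative
  set F1 : ℂ → ℂ := fun z => T' z * G z + T z * (α * (deriv PsiW z / PsiW z) * G z) with hF1
  have hdF : deriv F =ᶠ[nhds 0] F1 := by
    filter_upwards [hUnhds] with z hz
    exact (hFd z hz).deriv
  have hT'd : HasDerivAt T' (a*k1^2*Complex.exp (k1*0) + b*k2^2*Complex.exp (k2*0) + c*k3^2*Complex.exp (k3*0)) 0 := by
    have h1 : HasDerivAt (fun w : ℂ => Complex.exp (k1 * w)) (k1 * Complex.exp (k1 * 0)) 0 := by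
      simpa [mul_comm, Function.comp_def] using (Complex.hasDerivAt_exp (k1*0)).comp 0 ((hasDerivAt_id 0).const_mul k1)
    have h2 : HasDerivAt (fun w : ℂ => Complex.exp (k2 * w)) (k2 * Complex.exp (k2 * 0)) 0 := by
      simpa [mul_comm, Function.comp_def] using (Complex.hasDerivAt_exp (k2*0)).comp 0 ((hasDerivAt_id 0).const_mul k2)
    have h3 : HasDerivAt (fun w : ℂ => Complex.exp (k3 * w)) (k3 * Complex.exp (k3 * 0)) 0 := by
      simpa [mul_comm, Function.comp_def] using (Complex.hasDerivAt_exp (k3*0)).comp 0 ((hasDerivAt_id 0).const_mul k3)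
    have := ((h1.const_mul (a*k1)).fun_add (h2.const_mul (b*k2))).fun_add (h3.const_mul (c*k3))
    refine this.congr_deriv ?_
    ring
  have hQ : HasDerivAt (fun z => deriv PsiW z / PsiW z)
      ((deriv (deriv PsiW) 0 * PsiW 0 - deriv PsiW 0 * deriv PsiW 0) / PsiW 0 ^ 2) 0 :=
    (derivPsiW_hasDerivAt 0).div (psiW_hasDerivAt 0) (by rw [hPsi0]; exact one_ne_zero)
  have hG0' : HasDerivAt G (α * (deriv PsiW 0 / PsiW 0) * G 0) 0 := hGd 0 h0U
  have hF1d : HasDerivAt F1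
      ((a*k1^2*Complex.exp (k1*0) + b*k2^2*Complex.exp (k2*0) + c*k3^2*Complex.exp (k3*0)) * G 0
        + T' 0 * (α * (deriv PsiW 0 / PsiW 0) * G 0)
        + (T' 0 * (α * (deriv PsiW 0 / PsiW 0) * G 0)
          + T 0 * ((α * ((deriv (deriv PsiW) 0 * PsiW 0 - deriv PsiW 0 * deriv PsiW 0) / PsiW 0 ^ 2)) * G 0
            + (α * (deriv PsiW 0 / PsiW 0)) * (α * (deriv PsiW 0 / PsiW 0) * G 0)))) 0 := by
    have hb : HasDerivAt (fun z => α * (deriv PsiW z / PsiW z) * G z)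
        ((α * ((deriv (deriv PsiW) 0 * PsiW 0 - deriv PsiW 0 * deriv PsiW 0) / PsiW 0 ^ 2)) * G 0
          + (α * (deriv PsiW 0 / PsiW 0)) * (α * (deriv PsiW 0 / PsiW 0) * G 0)) 0 := by
      have := (hQ.const_mul α).fun_mul hG0'
      convert this using 1
    exact (hT'd.mul hG0').add ((hTd 0).mul hb)
  have hd2F0 : deriv (deriv F) 0 = 0 := by
    rw [hdF.deriv_eq, hF1d.deriv, hT'0, hT0, hG0, hPsi0, derivPsiW_zero, deriv2PsiW_zero]
    simp only [mul_zero, Complex.exp_zero]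
    ring_nf
    linear_combination h2 - α * h1 + (α/12 + α^2/4) * h0
  -- analyticity and power series
  have hFanal : AnalyticAt ℂ F 0 := by
    have hlog : AnalyticAt ℂ (fun z => Complex.log (PsiW z)) 0 :=
      (psiW_analyticAt 0).clog (by rw [hPsi0]; exact Complex.one_mem_slitPlane)
    have hGanal : AnalyticAt ℂ G 0 := (analyticAt_const.mul hlog).cexp
    have hTanal : AnalyticAt ℂ T 0 := by
      apply AnalyticAt.add
      apply AnalyticAt.add
      all_goals exact analyticAt_const.mul ((analyticAt_const.mul analyticAt_id).cexp)
    exact (hTanal.mul hGanal).sub analyticAt_const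
  obtain ⟨pser, hps⟩ := hFanal
  obtain ⟨rad, hball⟩ := id hps
  have hcoeff : ∀ n, ((Nat.factorial n : ℕ) : ℂ) * pser.coeff n = iteratedDeriv n F 0 := by
    intro n
    rw [iteratedDeriv_eq_iteratedFDeriv]
    have := hball.factorial_smul (y := (1:ℂ)) n
    rw [show ((Nat.factorial n : ℕ) : ℂ) * pser.coeff n = (Nat.factorial n) • pser.coeff n from (nsmul_eq_mul _ _).symm]
    exact this
  have c0 : pser.coeff 0 = 0 := by
    have := hcoeff 0; rw [iteratedDeriv_zero, hF0] at this; simpa using this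
  have c1 : pser.coeff 1 = 0 := by
    have := hcoeff 1; rw [iteratedDeriv_one, hdF0] at this; simpa using this
  have c2 : pser.coeff 2 = 0 := by
    have := hcoeff 2
    rw [show (2:ℕ) = 1 + 1 from rfl, iteratedDeriv_succ, iteratedDeriv_one, hd2F0] at this
    norm_num [Nat.factorial] at this
    exact this
  have hsum : ∀ y : ℂ, pser.partialSum 3 y = 0 := by
    intro y
    simp [FormalMultilinearSeries.partialSum, Finset.sum_range_succ,
      FormalMultilinearSeries.apply_eq_pow_smul_coeff, c0, c1, c2]
  have hbig := hps.isBigO_sub_partialSum_pow 3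
  simp only [zero_add, hsum, sub_zero] at hbig
  exact hbig
end main


set_option maxHeartbeats 1000000 in
theorem WSGD3_third_order_multiplier (α : ℝ) (hα : 0 < α) (p q r : ℤ)
    (hpq : p ≠ q) (hpr : p ≠ r) (hqr : q ≠ r)
    (l1 l2 l3 : ℝ)
    (hl1 : l1 = (12 * (q : ℝ) * (r : ℝ) - (6 * (q : ℝ) + 6 * (r : ℝ) + 1) * α + 3 * α ^ 2)
        / (12 * ((q : ℝ) * (r : ℝ) - (p : ℝ) * (q : ℝ) - (p : ℝ) * (r : ℝ) + (p : ℝ) ^ 2)))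
    (hl2 : l2 = (12 * (p : ℝ) * (r : ℝ) - (6 * (p : ℝ) + 6 * (r : ℝ) + 1) * α + 3 * α ^ 2)
        / (12 * ((p : ℝ) * (r : ℝ) - (p : ℝ) * (q : ℝ) - (q : ℝ) * (r : ℝ) + (q : ℝ) ^ 2)))
    (hl3 : l3 = (12 * (p : ℝ) * (q : ℝ) - (6 * (p : ℝ) + 6 * (q : ℝ) + 1) * α + 3 * α ^ 2)
        / (12 * ((p : ℝ) * (q : ℝ) - (p : ℝ) * (r : ℝ) - (q : ℝ) * (r : ℝ) + (r : ℝ) ^ 2))) :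
    ∃ C > (0 : ℝ), ∀ θ : ℝ,
      ‖((l1 : ℂ) * (1 - Complex.exp (-((θ : ℂ) * Complex.I))) ^ (α : ℂ)
            * Complex.exp ((p : ℂ) * (θ : ℂ) * Complex.I)
          + (l2 : ℂ) * (1 - Complex.exp (-((θ : ℂ) * Complex.I))) ^ (α : ℂ)
            * Complex.exp ((q : ℂ) * (θ : ℂ) * Complex.I)
          + (l3 : ℂ) * (1 - Complex.exp (-((θ : ℂ) * Complex.I))) ^ (α : ℂ)
            * Complex.exp ((r : ℂ) * (θ : ℂ) * Complex.I)
          - ((θ : ℂ) * Complex.I) ^ (α : ℂ))‖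
        ≤ C * |θ| ^ (α + 3) := by
  -- algebraic identities
  have hsums : l1 + l2 + l3 = 1 ∧ l1*p + l2*q + l3*r = α/2
      ∧ l1*p^2 + l2*q^2 + l3*r^2 = α^2/4 - α/12 := by
    have hpq' : (p:ℝ) - q ≠ 0 := sub_ne_zero.2 (by exact_mod_cast hpq)
    have hpr' : (p:ℝ) - r ≠ 0 := sub_ne_zero.2 (by exact_mod_cast hpr)
    have hqr' : (q:ℝ) - r ≠ 0 := sub_ne_zero.2 (by exact_mod_cast hqr)
    have e1 : (q:ℝ) * r - p * q - p * r + (p:ℝ)^2 = ((p:ℝ) - q) * ((p:ℝ) - r) := by ring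
    have e2 : (p:ℝ) * r - p * q - q * r + (q:ℝ)^2 = -(((p:ℝ) - q) * ((q:ℝ) - r)) := by ring
    have e3 : (p:ℝ) * q - p * r - q * r + (r:ℝ)^2 = ((p:ℝ) - r) * ((q:ℝ) - r) := by ring
    subst hl1 hl2 hl3
    rw [e1, e2, e3]
    refine ⟨?_, ?_, ?_⟩ <;>
    · field_simp
      ring
  obtain ⟨hs0, hs1, hs2⟩ := hsums
  have hc0 : (l1:ℂ) + l2 + l3 = 1 := by exact_mod_cast hs0
  have hc1 : (l1:ℂ)*(p:ℂ) + (l2:ℂ)*(q:ℂ) + (l3:ℂ)*(r:ℂ) = (α:ℂ)/2 := by exact_mod_cast hs1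
  have hc2 : (l1:ℂ)*(p:ℂ)^2 + (l2:ℂ)*(q:ℂ)^2 + (l3:ℂ)*(r:ℂ)^2 = (α:ℂ)^2/4 - (α:ℂ)/12 := by
    exact_mod_cast hs2
  have hbig := key_bigO (α:ℂ) (l1:ℂ) (l2:ℂ) (l3:ℂ) (p:ℂ) (q:ℂ) (r:ℂ) hc0 hc1 hc2
  set Fc : ℂ → ℂ := fun z => ((l1:ℂ) * Complex.exp ((p:ℂ)*z) + (l2:ℂ) * Complex.exp ((q:ℂ)*z)
      + (l3:ℂ) * Complex.exp ((r:ℂ)*z)) * Complex.exp ((α:ℂ) * Complex.log (PsiW z)) - 1 with hFc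
  -- extract bound from bigO
  rw [isBigO_iff] at hbig
  obtain ⟨c1, hc1'⟩ := hbig
  rw [Metric.eventually_nhds_iff] at hc1'
  obtain ⟨ε1, hε1, hb1⟩ := hc1'
  -- neighborhood where Re (PsiW z) > 0
  have hpsiCont : Continuous PsiW := continuous_iff_continuousAt.2 fun z => (psiW_analyticAt z).continuousAt
  have hVopen : IsOpen {z : ℂ | 0 < (PsiW z).re} := (isOpen_lt continuous_const (Complex.continuous_re.comp hpsiCont))
  have h0V : (0:ℂ) ∈ {z : ℂ | 0 < (PsiW z).re} := by simp [psiW_zero]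
  obtain ⟨ε2, hε2, hb2⟩ := Metric.isOpen_iff.1 hVopen 0 h0V
  set δ : ℝ := min ε1 ε2 / 2 with hδ
  have hδpos : 0 < δ := by positivity
  have hδε1 : δ < ε1 := by
    have : δ ≤ ε1 / 2 := by
      apply div_le_div_of_nonneg_right ?_ ?_ |>.trans_eq rfl
      · exact min_le_left _ _
      · norm_num
    linarith
  have hδε2 : δ < ε2 := by
    have : δ ≤ ε2 / 2 := by
      apply div_le_div_of_nonneg_right ?_ ?_ |>.trans_eq rfl
      · exact min_le_right _ _
      · norm_num
    linarith
  set B : ℝ := (|l1| + |l2| + |l3|) * (2:ℝ) ^ α with hB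
  have hBnn : 0 ≤ B := by positivity
  set C : ℝ := (|c1| + 1) + B / δ ^ (α + 3) + 1 / δ ^ (3:ℕ) with hC
  have hCpos : 0 < C := by positivity
  refine ⟨C, hCpos, fun θ => ?_⟩
  by_cases hθ0 : θ = 0
  · subst hθ0
    have hαne : ((α:ℝ):ℂ) ≠ 0 := Complex.ofReal_ne_zero.2 hα.ne'
    simp [Complex.zero_cpow hαne, Real.zero_rpow (by positivity : α + 3 ≠ 0)]
  set z : ℂ := (θ:ℂ) * Complex.I with hzdef
  have hz : z ≠ 0 := mul_ne_zero (Complex.ofReal_ne_zero.2 hθ0) Complex.I_ne_zero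
  have habsz : ‖z‖ = |θ| := by
    rw [hzdef, norm_mul, Complex.norm_I, Complex.norm_real, Real.norm_eq_abs, mul_one]
  have hnormz : ‖z‖ = |θ| := habsz
  have hθpos : 0 < |θ| := abs_pos.2 hθ0
  have hrpow_split : |θ| ^ (α + 3) = |θ| ^ α * |θ| ^ (3:ℕ) := by
    rw [Real.rpow_add hθpos, ← Real.rpow_natCast |θ| 3]
    norm_num
  -- rewrite main expression
  have hE : ((l1 : ℂ) * (1 - Complex.exp (-((θ : ℂ) * Complex.I))) ^ (α : ℂ)
            * Complex.exp ((p : ℂ) * (θ : ℂ) * Complex.I)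
          + (l2 : ℂ) * (1 - Complex.exp (-((θ : ℂ) * Complex.I))) ^ (α : ℂ)
            * Complex.exp ((q : ℂ) * (θ : ℂ) * Complex.I)
          + (l3 : ℂ) * (1 - Complex.exp (-((θ : ℂ) * Complex.I))) ^ (α : ℂ)
            * Complex.exp ((r : ℂ) * (θ : ℂ) * Complex.I)
          - ((θ : ℂ) * Complex.I) ^ (α : ℂ))
      = (1 - Complex.exp (-z)) ^ ((α:ℝ) : ℂ)
          * ((l1:ℂ) * Complex.exp ((p:ℂ)*z) + (l2:ℂ) * Complex.exp ((q:ℂ)*z)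
            + (l3:ℂ) * Complex.exp ((r:ℂ)*z)) - z ^ ((α:ℝ) : ℂ) := by
    rw [hzdef]
    ring_nf
  rw [hE]
  rcases lt_or_ge (|θ|) δ with hsmall | hlarge
  · -- small θ
    have hmem2 : z ∈ Metric.ball (0:ℂ) ε2 := by
      rw [Metric.mem_ball, dist_zero_right, hnormz]; linarith
    have hψ : 0 < (PsiW z).re := hb2 hmem2
    have hψne : PsiW z ≠ 0 := fun h => by simp [h] at hψ
    have hargψ : |Complex.arg (PsiW z)| < Real.pi / 2 :=
      Complex.abs_arg_lt_pi_div_two_iff.2 (Or.inl hψ)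
    have hargz : Complex.arg z = Real.pi/2 ∨ Complex.arg z = -(Real.pi/2) := by
      rcases lt_or_gt_of_ne hθ0 with hneg | hpos
      · right
        have : z = ((-θ : ℝ) : ℂ) * (-Complex.I) := by rw [hzdef]; push_cast; ring
        rw [this, Complex.arg_real_mul _ (by linarith : (0:ℝ) < -θ), Complex.arg_neg_I]
      · left
        rw [hzdef, Complex.arg_real_mul _ hpos, Complex.arg_I]
    have harg : Complex.arg z + Complex.arg (PsiW z) ∈ Set.Ioc (-Real.pi) Real.pi := by
      rw [abs_lt] at hargψ
      have hπ := Real.pi_pos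
      rcases hargz with h | h <;> rw [h] <;> constructor <;> [linarith; linarith; linarith; linarith]
    have hcpow : (1 - Complex.exp (-z)) ^ ((α:ℝ) : ℂ)
        = z ^ ((α:ℝ) : ℂ) * Complex.exp ((α:ℂ) * Complex.log (PsiW z)) := by
      rw [← psiW_key z, Complex.cpow_def_of_ne_zero (mul_ne_zero hz hψne),
        Complex.log_mul hz hψne harg, add_mul, Complex.exp_add,
        Complex.cpow_def_of_ne_zero hz, mul_comm (Complex.log (PsiW z)) ((α:ℝ):ℂ)]
    have hEz : (1 - Complex.exp (-z)) ^ ((α:ℝ) : ℂ)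
          * ((l1:ℂ) * Complex.exp ((p:ℂ)*z) + (l2:ℂ) * Complex.exp ((q:ℂ)*z)
            + (l3:ℂ) * Complex.exp ((r:ℂ)*z)) - z ^ ((α:ℝ) : ℂ)
        = z ^ ((α:ℝ) : ℂ) * Fc z := by
      rw [hcpow, hFc]; ring
    rw [hEz, norm_mul, Complex.norm_cpow_real, habsz]
    have hmem1 : dist z 0 < ε1 := by rw [dist_zero_right, hnormz]; linarith
    have hFb : ‖Fc z‖ ≤ c1 * |θ| ^ (3:ℕ) := by
      have := hb1 hmem1
      rw [hnormz] at this
      calc ‖Fc z‖ ≤ c1 * ‖|θ| ^ 3‖ := this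
        _ = c1 * |θ| ^ (3:ℕ) := by
            congr 1
            rw [Real.norm_eq_abs]
            exact abs_of_nonneg (by positivity)
    have hFb2 : ‖Fc z‖ ≤ (|c1| + 1) * |θ| ^ (3:ℕ) := by
      have h1 : (‖Fc z‖ : ℝ) = ‖Fc z‖ := rfl
      have : c1 * |θ| ^ (3:ℕ) ≤ (|c1| + 1) * |θ| ^ (3:ℕ) := by
        apply mul_le_mul_of_nonneg_right _ (by positivity)
        have := le_abs_self c1; linarith
      rw [h1]; linarith [hFb]
    calc |θ| ^ α * ‖Fc z‖ ≤ |θ| ^ α * ((|c1| + 1) * |θ| ^ (3:ℕ)) := by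
          exact mul_le_mul_of_nonneg_left hFb2 (Real.rpow_nonneg (abs_nonneg θ) α)
      _ = (|c1| + 1) * |θ| ^ (α + 3) := by rw [hrpow_split]; ring
      _ ≤ C * |θ| ^ (α + 3) := by
          apply mul_le_mul_of_nonneg_right _ (Real.rpow_nonneg (abs_nonneg θ) _)
          rw [hC]
          have h1 : 0 ≤ B / δ ^ (α + 3) := by positivity
          have h2 : 0 ≤ 1 / δ ^ (3:ℕ) := by positivity
          linarith
  · -- large θ
    have habs_exp_one : ∀ k : ℤ, ‖Complex.exp ((k:ℂ) * z)‖ = 1 := by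
      intro k
      rw [Complex.norm_exp]
      have : ((k:ℂ) * z).re = 0 := by
        rw [hzdef]
        simp [Complex.mul_re]
      rw [this, Real.exp_zero]
    have hA : ‖(1 - Complex.exp (-z)) ^ ((α:ℝ) : ℂ)‖ ≤ (2:ℝ) ^ α := by
      rw [Complex.norm_cpow_real]
      apply Real.rpow_le_rpow (norm_nonneg _) _ hα.le
      have h1 : ‖Complex.exp (-z)‖ = 1 := by
        rw [Complex.norm_exp]
        have : (-z).re = 0 := by rw [hzdef]; simp
        rw [this, Real.exp_zero]
      calc ‖1 - Complex.exp (-z)‖ ≤ ‖(1:ℂ)‖ + ‖Complex.exp (-z)‖ :=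
            norm_sub_le _ _
        _ = 2 := by rw [h1, norm_one]; norm_num
    have htri : ‖(1 - Complex.exp (-z)) ^ ((α:ℝ) : ℂ)
          * ((l1:ℂ) * Complex.exp ((p:ℂ)*z) + (l2:ℂ) * Complex.exp ((q:ℂ)*z)
            + (l3:ℂ) * Complex.exp ((r:ℂ)*z)) - z ^ ((α:ℝ) : ℂ)‖
        ≤ B + |θ| ^ α := by
      have hT : ‖(l1:ℂ) * Complex.exp ((p:ℂ)*z) + (l2:ℂ) * Complex.exp ((q:ℂ)*z)
            + (l3:ℂ) * Complex.exp ((r:ℂ)*z)‖ ≤ |l1| + |l2| + |l3| := by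
        calc ‖_‖ ≤ ‖(l1:ℂ) * Complex.exp ((p:ℂ)*z)‖
              + ‖(l2:ℂ) * Complex.exp ((q:ℂ)*z)‖
              + ‖(l3:ℂ) * Complex.exp ((r:ℂ)*z)‖ := by
              apply le_trans (norm_add_le _ _)
              gcongr
              try exact norm_add_le _ _
          _ = |l1| + |l2| + |l3| := by
              rw [norm_mul, norm_mul, norm_mul, habs_exp_one p, habs_exp_one q, habs_exp_one r,
                Complex.norm_real, Complex.norm_real, Complex.norm_real, Real.norm_eq_abs, Real.norm_eq_abs, Real.norm_eq_abs]
              ring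
      have hzα : ‖z ^ ((α:ℝ) : ℂ)‖ = |θ| ^ α := by
        rw [Complex.norm_cpow_real, habsz]
      calc ‖_‖ ≤ ‖(1 - Complex.exp (-z)) ^ ((α:ℝ) : ℂ)
              * ((l1:ℂ) * Complex.exp ((p:ℂ)*z) + (l2:ℂ) * Complex.exp ((q:ℂ)*z)
                + (l3:ℂ) * Complex.exp ((r:ℂ)*z))‖ + ‖z ^ ((α:ℝ) : ℂ)‖ :=
            norm_sub_le _ _
        _ ≤ (2:ℝ) ^ α * (|l1| + |l2| + |l3|) + |θ| ^ α := by
            rw [norm_mul, hzα]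
            gcongr
            all_goals first
              | exact norm_nonneg _
              | exact hA
              | exact hT
              | skip
        _ = B + |θ| ^ α := by rw [hB]; ring
    have hδθ : δ ≤ |θ| := hlarge
    have hpow1 : δ ^ (α + 3) ≤ |θ| ^ (α + 3) := Real.rpow_le_rpow hδpos.le hδθ (by positivity)
    have hpow2 : δ ^ (3:ℕ) ≤ |θ| ^ (3:ℕ) := by gcongr
    have hδa3 : (0:ℝ) < δ ^ (α + 3) := Real.rpow_pos_of_pos hδpos _
    have hδ3 : (0:ℝ) < δ ^ (3:ℕ) := by positivity
    have hBle : B ≤ B / δ ^ (α + 3) * |θ| ^ (α + 3) := by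
      rw [div_mul_eq_mul_div, le_div_iff₀ hδa3]
      exact mul_le_mul_of_nonneg_left hpow1 hBnn
    have hθαle : |θ| ^ α ≤ 1 / δ ^ (3:ℕ) * |θ| ^ (α + 3) := by
      rw [hrpow_split, one_div, ← mul_assoc, mul_comm ((δ ^ (3:ℕ))⁻¹) (|θ| ^ α), mul_assoc]
      have : (1:ℝ) ≤ (δ ^ (3:ℕ))⁻¹ * |θ| ^ (3:ℕ) := by
        rw [← div_eq_inv_mul, le_div_iff₀ hδ3, one_mul]
        exact hpow2
      nlinarith [Real.rpow_nonneg (abs_nonneg θ) α]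
    refine le_trans htri ?_
    calc B + |θ| ^ α ≤ B / δ ^ (α + 3) * |θ| ^ (α + 3) + 1 / δ ^ (3:ℕ) * |θ| ^ (α + 3) := by
          linarith
      _ ≤ C * |θ| ^ (α + 3) := by
          rw [hC]
          have h3 : (0:ℝ) ≤ (|c1| + 1) * |θ| ^ (α + 3) := by positivity
          nlinarith [Real.rpow_nonneg (abs_nonneg θ) (α + 3)]
end

section
/- Let 1 ≤ α ≤ 2 and let w_k be the WSGD weights for (p,q)=(1,0). Then for every x ∈ [0, π], Σ_{k=0}^∞ w_k cos((k-1)x) = (2 sin(x/2))^α · [ (α/2) cos( (α/2)(x-π) - x ) + ((2-α)/2) cos( (α/2)(x-π) ) ]. -/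
open Finset Metric Filter Topology

/-- Grünwald coefficients `g_k = (-1)^k * binom(α, k)`. -/
noncomputable def gru (α : ℝ) (k : ℕ) : ℝ :=
  (-1 : ℝ) ^ k * (∏ i ∈ Finset.range k, (α - (i : ℝ))) / (Nat.factorial k : ℝ)

/-- WSGD weights for `(p,q) = (1,0)`. -/
noncomputable def w10 (α : ℝ) : ℕ → ℝ
  | 0 => α / 2 * gru α 0
  | k + 1 => α / 2 * gru α (k + 1) + (2 - α) / 2 * gru α k

/-- WSGD weights for `(p,q) = (1,-1)`. -/
noncomputable def w1m1 (α : ℝ) : ℕ → ℝ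
  | 0 => (2 + α) / 4 * gru α 0
  | 1 => (2 + α) / 4 * gru α 1
  | k + 2 => (2 + α) / 4 * gru α (k + 2) + (2 - α) / 4 * gru α k

lemma gru_zero (α : ℝ) : gru α 0 = 1 := by simp [gru]

lemma gru_one (α : ℝ) : gru α 1 = -α := by simp [gru]

lemma gru_succ (α : ℝ) (k : ℕ) :
    gru α (k + 1) = gru α k * (((k : ℝ) - α) / ((k : ℝ) + 1)) := by
  have hk : (Nat.factorial k : ℝ) ≠ 0 := Nat.cast_ne_zero.2 (Nat.factorial_ne_zero k)
  have hk1 : ((k : ℝ) + 1) ≠ 0 := by positivity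
  simp only [gru, Finset.prod_range_succ, Nat.factorial_succ, pow_succ, Nat.cast_mul,
    Nat.cast_add, Nat.cast_one]
  field_simp
  ring

lemma gru_pascal (α : ℝ) (k : ℕ) :
    gru α (k + 1) = gru (α - 1) (k + 1) - gru (α - 1) k := by
  have hk : (Nat.factorial k : ℝ) ≠ 0 := Nat.cast_ne_zero.2 (Nat.factorial_ne_zero k)
  have hk1 : ((k : ℝ) + 1) ≠ 0 := by positivity
  have h1 : ∏ i ∈ Finset.range (k + 1), (α - (i : ℝ))
      = α * ∏ i ∈ Finset.range k, (α - 1 - (i : ℝ)) := by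
    rw [Finset.prod_range_succ']
    simp only [Nat.cast_add, Nat.cast_one, Nat.cast_zero, sub_zero]
    rw [mul_comm]
    congr 1
    exact Finset.prod_congr rfl fun i _ => by ring
  simp only [gru, h1, Finset.prod_range_succ, Nat.factorial_succ, pow_succ, Nat.cast_mul,
    Nat.cast_add, Nat.cast_one]
  field_simp
  ring


lemma gru_abs_succ_le {α : ℝ} {k : ℕ} (h : |(k:ℝ) - α| ≤ (k:ℝ) + 1) :
    |gru α (k + 1)| ≤ |gru α k| := by
  have hk1 : (0:ℝ) < (k:ℝ) + 1 := by positivity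
  rw [gru_succ, abs_mul, abs_div, abs_of_pos hk1]
  calc |gru α k| * (|(k:ℝ) - α| / ((k:ℝ) + 1))
      ≤ |gru α k| * (((k:ℝ) + 1) / ((k:ℝ) + 1)) := by
        apply mul_le_mul_of_nonneg_left _ (abs_nonneg _)
        exact div_le_div_of_nonneg_right h hk1.le |>.trans_eq rfl
    _ = |gru α k| := by rw [div_self hk1.ne', mul_one]

section bounds
variable {α : ℝ} (hα1 : 1 ≤ α) (hα2 : α ≤ 2)

include hα1 hα2 in
lemma gru_abs_le : ∀ k, |gru α k| ≤ 2 := by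
  have key : ∀ k, |gru α (k + 1)| ≤ α := by
    intro k
    induction k with
    | zero => rw [gru_one, abs_neg, abs_of_nonneg (by linarith)]
    | succ n ih =>
        refine le_trans (gru_abs_succ_le ?_) ih
        have hn : (0:ℝ) ≤ (n:ℝ) := Nat.cast_nonneg n
        rw [abs_le]
        push_cast
        constructor <;> linarith
  intro k
  cases k with
  | zero => rw [gru_zero]; norm_num
  | succ n => exact (key n).trans hα2

include hα1 hα2 in
lemma gru_nonneg : ∀ k, 0 ≤ gru α (k + 2) := by
  intro k
  induction k with
  | zero =>
      have h2 : gru α 2 = α * (α - 1) / 2 := by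
        rw [show (2 : ℕ) = 1 + 1 from rfl, gru_succ, gru_one]
        push_cast; ring
      rw [h2]
      have h1 : 0 ≤ α - 1 := by linarith
      positivity
  | succ n ih =>
      rw [show n + 1 + 2 = (n + 2) + 1 from rfl, gru_succ]
      apply mul_nonneg ih
      apply div_nonneg _ (by positivity)
      have hn : (0:ℝ) ≤ (n:ℝ) := Nat.cast_nonneg n
      push_cast
      linarith

end bounds

lemma gru_beta_abs_le {β : ℝ} (hβ0 : 0 ≤ β) (hβ1 : β ≤ 1) :
    ∀ n, |gru β (n + 1)| ≤ β / ((n : ℝ) + 1) := by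
  intro n
  induction n with
  | zero => rw [gru_one, abs_neg, abs_of_nonneg hβ0]; norm_num
  | succ n ih =>
      have hn : (0:ℝ) ≤ (n:ℝ) := Nat.cast_nonneg n
      have hk1 : (0:ℝ) < (n:ℝ) + 1 := by positivity
      have hk2 : (0:ℝ) < (n:ℝ) + 1 + 1 := by positivity
      rw [gru_succ, abs_mul, abs_div]
      push_cast
      rw [abs_of_pos hk2]
      have habs : |(n:ℝ) + 1 - β| ≤ (n:ℝ) + 1 := by
        rw [abs_le]; constructor <;> linarith
      calc |gru β (n + 1)| * (|(n:ℝ) + 1 - β| / ((n:ℝ) + 1 + 1))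
          ≤ (β / ((n:ℝ) + 1)) * (((n:ℝ) + 1) / ((n:ℝ) + 1 + 1)) := by
            apply mul_le_mul ih _ (by positivity) (by positivity)
            exact div_le_div_of_nonneg_right habs hk2.le |>.trans_eq rfl
        _ = β / ((n:ℝ) + 1 + 1) := by field_simp

lemma gru_partial_sum (α : ℝ) : ∀ n, ∑ k ∈ range (n + 1), gru α k = gru (α - 1) n := by
  intro n
  induction n with
  | zero => simp [gru_zero]
  | succ n ih =>
      rw [Finset.sum_range_succ, ih, gru_pascal]
      ring


section sums
variable {α : ℝ} (hα1 : 1 ≤ α) (hα2 : α ≤ 2)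

include hα1 hα2 in
lemma gru_summable_abs : Summable (fun k => |gru α k|) := by
  have hβ0 : (0:ℝ) ≤ α - 1 := by linarith
  have hβ1 : α - 1 ≤ 1 := by linarith
  have hsum2 : Summable (fun k => gru α (k + 2)) := by
    apply summable_of_sum_range_le (c := 2) (fun n => gru_nonneg hα1 hα2 n)
    intro n
    have key : ∑ k ∈ range n, gru α (k + 2) = gru (α - 1) (n + 1) - 1 + α := by
      have h1 : ∑ k ∈ range (n + 2), gru α k = gru (α - 1) (n + 1) := gru_partial_sum α (n + 1)
      rw [Finset.sum_range_succ'] at h1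
      rw [Finset.sum_range_succ'] at h1
      simp only [zero_add, gru_zero, gru_one] at h1
      calc ∑ k ∈ range n, gru α (k + 2) = ∑ k ∈ range n, gru α (k + 1 + 1) := rfl
        _ = gru (α - 1) (n + 1) - 1 + α := by linarith
    rw [key]
    have h2 : |gru (α - 1) (n + 1)| ≤ (α - 1) / ((n:ℝ) + 1) := gru_beta_abs_le hβ0 hβ1 n
    have h3 : (α - 1) / ((n:ℝ) + 1) ≤ 1 := by
      rw [div_le_one (by positivity)]
      have : (0:ℝ) ≤ (n:ℝ) := Nat.cast_nonneg n
      linarith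
    have h4 : gru (α - 1) (n + 1) ≤ 1 := le_trans (le_abs_self _) (h2.trans h3)
    linarith
  have habs2 : Summable (fun k => |gru α (k + 2)|) :=
    hsum2.congr fun k => (abs_of_nonneg (gru_nonneg hα1 hα2 k)).symm
  exact (summable_nat_add_iff 2).1 habs2

include hα1 hα2 in
lemma gru_tendsto_beta : Filter.Tendsto (fun n => gru (α - 1) n) Filter.atTop (nhds 0) := by
  apply squeeze_zero_norm' (a := fun n : ℕ => (α - 1) / (n:ℝ))
  · filter_upwards [Filter.eventually_ge_atTop 1] with n hn
    obtain ⟨m, rfl⟩ := Nat.exists_eq_add_of_le hn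
    have := gru_beta_abs_le (by linarith : (0:ℝ) ≤ α - 1) (by linarith) m
    rw [Real.norm_eq_abs]
    calc |gru (α - 1) (1 + m)| = |gru (α - 1) (m + 1)| := by rw [Nat.add_comm]
      _ ≤ (α - 1) / ((m:ℝ) + 1) := this
      _ = (α - 1) / ((1 + m : ℕ) : ℝ) := by push_cast; ring_nf
  · exact tendsto_const_div_atTop_nhds_zero_nat (α - 1)

include hα1 hα2 in
lemma gru_hasSum_zero : HasSum (fun k => gru α k) 0 := by
  have hs : Summable (fun k => gru α k) := (gru_summable_abs hα1 hα2).of_abs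
  have h1 := hs.hasSum.tendsto_sum_nat
  have h2 : Filter.Tendsto (fun n => ∑ k ∈ range n, gru α k) Filter.atTop (nhds 0) := by
    have h3 : Filter.Tendsto (fun n : ℕ => ∑ k ∈ range (n + 1), gru α k)
        Filter.atTop (nhds 0) := by
      have heq : (fun n : ℕ => ∑ k ∈ range (n + 1), gru α k) = fun n => gru (α - 1) n :=
        funext (gru_partial_sum α)
      rw [heq]
      exact gru_tendsto_beta hα1 hα2
    exact (Filter.tendsto_add_atTop_iff_nat 1).1 h3
  have : ∑' k, gru α k = 0 := tendsto_nhds_unique h1 h2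
  exact this ▸ hs.hasSum

end sums


noncomputable def cg (α : ℝ) (k : ℕ) : ℂ := ((gru α k : ℝ) : ℂ)

lemma cg_succ (α : ℝ) (k : ℕ) :
    cg α (k + 1) * ((k : ℂ) + 1) = cg α k * ((k : ℂ) - (α : ℂ)) := by
  have hk1 : ((k : ℝ) + 1) ≠ 0 := by positivity
  have h : gru α (k + 1) * ((k : ℝ) + 1) = gru α k * ((k : ℝ) - α) := by
    rw [gru_succ]; field_simp
  have := congrArg (fun t : ℝ => (t : ℂ)) h
  push_cast at this
  simpa [cg] using this

lemma cg_norm {α : ℝ} (hα1 : 1 ≤ α) (hα2 : α ≤ 2) (k : ℕ) : ‖cg α k‖ ≤ 2 := by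
  simpa [cg, Complex.norm_real] using gru_abs_le hα1 hα2 k

lemma summable_deriv_bound {r : ℝ} (hr0 : 0 ≤ r) (hr1 : r < 1) :
    Summable (fun n : ℕ => 2 * (n : ℝ) * r ^ (n - 1)) := by
  rw [← summable_nat_add_iff 1]
  have h1 : Summable (fun n : ℕ => (n : ℝ) ^ 1 * r ^ n) :=
    summable_pow_mul_geometric_of_norm_lt_one 1 (by rwa [Real.norm_eq_abs, abs_of_nonneg hr0])
  have h2 : Summable (fun n : ℕ => r ^ n) := summable_geometric_of_lt_one hr0 hr1
  apply Summable.congr ((h1.mul_left 2).add (h2.mul_left 2))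
  intro n
  push_cast
  ring

lemma summable_cg_pow {α : ℝ} (hα1 : 1 ≤ α) (hα2 : α ≤ 2) {v : ℂ} (hv : ‖v‖ < 1) :
    Summable (fun n : ℕ => cg α n * v ^ n) := by
  apply Summable.of_norm_bounded (g := fun n => 2 * ‖v‖ ^ n)
    ((summable_geometric_of_lt_one (norm_nonneg v) hv).mul_left 2)
  intro n
  rw [norm_mul, norm_pow]
  exact mul_le_mul_of_nonneg_right (cg_norm hα1 hα2 n) (by positivity)

lemma summable_cg_deriv {α : ℝ} (hα1 : 1 ≤ α) (hα2 : α ≤ 2) {v : ℂ} {r : ℝ}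
    (hv : ‖v‖ ≤ r) (hr1 : r < 1) :
    Summable (fun n : ℕ => cg α n * ((n : ℂ) * v ^ (n - 1))) := by
  have hr0 : 0 ≤ r := le_trans (norm_nonneg v) hv
  apply Summable.of_norm_bounded (g := fun n : ℕ => 2 * (n : ℝ) * r ^ (n - 1))
    (summable_deriv_bound hr0 hr1)
  intro n
  rw [norm_mul, norm_mul, norm_pow, Complex.norm_natCast]
  calc ‖cg α n‖ * ((n : ℝ) * ‖v‖ ^ (n - 1))
      ≤ 2 * ((n : ℝ) * r ^ (n - 1)) := by
        apply mul_le_mul (cg_norm hα1 hα2 n)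
        · exact mul_le_mul_of_nonneg_left (pow_le_pow_left₀ (norm_nonneg v) hv _)
            (Nat.cast_nonneg n)
        · positivity
        · norm_num
    _ = 2 * (n : ℝ) * r ^ (n - 1) := by ring


section inside
variable {α : ℝ} (hα1 : 1 ≤ α) (hα2 : α ≤ 2)

include hα1 hα2 in
lemma hasDerivAt_F {v : ℂ} (hv : ‖v‖ < 1) :
    HasDerivAt (fun z : ℂ => ∑' n : ℕ, cg α n * z ^ n)
      (∑' n : ℕ, cg α n * ((n : ℂ) * v ^ (n - 1))) v := by
  set r : ℝ := (‖v‖ + 1) / 2 with hrdef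
  have hr0 : 0 < r := by positivity
  have hr1 : r < 1 := by rw [hrdef]; linarith
  have hvr : ‖v‖ < r := by rw [hrdef]; linarith
  apply hasDerivAt_tsum_of_isPreconnected
      (u := fun n : ℕ => 2 * (n : ℝ) * r ^ (n - 1))
      (summable_deriv_bound hr0.le hr1) (isOpen_ball (x := (0:ℂ)) (ε := r))
      ((convex_ball (0:ℂ) r).isPreconnected)
      (g' := fun n y => cg α n * ((n : ℂ) * y ^ (n - 1)))
      (fun n y _ => (hasDerivAt_pow n y).const_mul (cg α n))
      ?_ (y₀ := 0) (by simpa using hr0) ?_ (by simpa using hvr)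
  · intro n y hy
    rw [mem_ball, dist_zero_right] at hy
    rw [norm_mul, norm_mul, norm_pow, Complex.norm_natCast]
    calc ‖cg α n‖ * ((n : ℝ) * ‖y‖ ^ (n - 1))
        ≤ 2 * ((n : ℝ) * r ^ (n - 1)) := by
          apply mul_le_mul (cg_norm hα1 hα2 n)
          · exact mul_le_mul_of_nonneg_left (pow_le_pow_left₀ (norm_nonneg y) hy.le _)
              (Nat.cast_nonneg n)
          · positivity
          · norm_num
      _ = 2 * (n : ℝ) * r ^ (n - 1) := by ring
  · exact summable_cg_pow hα1 hα2 (by simp [hr0])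

include hα1 hα2 in
lemma ode_F {v : ℂ} (hv : ‖v‖ < 1) :
    (1 - v) * (∑' n : ℕ, cg α n * ((n : ℂ) * v ^ (n - 1)))
      + (α : ℂ) * (∑' n : ℕ, cg α n * v ^ n) = 0 := by
  set D := ∑' n : ℕ, cg α n * ((n : ℂ) * v ^ (n - 1)) with hD
  set Fv := ∑' n : ℕ, cg α n * v ^ n with hFv
  have A : HasSum (fun n : ℕ => cg α n * ((n : ℂ) * v ^ (n - 1))) D :=
    (summable_cg_deriv hα1 hα2 le_rfl hv).hasSum
  have B : HasSum (fun n : ℕ => cg α n * v ^ n) Fv := (summable_cg_pow hα1 hα2 hv).hasSum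
  have A1 : HasSum (fun n : ℕ => cg α (n + 1) * (((n + 1 : ℕ) : ℂ) * v ^ (n + 1 - 1))) D := by
    refine (hasSum_nat_add_iff (f := fun n : ℕ => cg α n * ((n : ℂ) * v ^ (n - 1))) 1).2 ?_
    simpa using A
  have A2 : HasSum (fun n : ℕ => cg α n * ((n : ℂ) - (α : ℂ)) * v ^ n) D := by
    have e : ∀ n : ℕ, cg α (n + 1) * (((n + 1 : ℕ) : ℂ) * v ^ (n + 1 - 1))
        = cg α n * ((n : ℂ) - (α : ℂ)) * v ^ n := by
      intro n
      have h := cg_succ α n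
      push_cast
      linear_combination v ^ n * h
    exact (funext e) ▸ A1
  have A3 : HasSum (fun n : ℕ => (n : ℂ) * cg α n * v ^ n) (D + (α : ℂ) * Fv) := by
    have := A2.add (B.mul_left (α : ℂ))
    have e : ∀ n : ℕ, cg α n * ((n : ℂ) - (α : ℂ)) * v ^ n + (α : ℂ) * (cg α n * v ^ n)
        = (n : ℂ) * cg α n * v ^ n := fun n => by ring
    exact (funext e) ▸ this
  have A4 : HasSum (fun n : ℕ => (n : ℂ) * cg α n * v ^ n) (v * D) := by
    have := A.mul_left v
    have e : ∀ n : ℕ, v * (cg α n * ((n : ℂ) * v ^ (n - 1)))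
        = (n : ℂ) * cg α n * v ^ n := by
      intro n
      cases n with
      | zero => simp
      | succ m =>
          have : v ^ (m + 1) = v * v ^ m := by rw [pow_succ]; ring
          simp only [Nat.add_sub_cancel, this]
          push_cast
          ring
    exact (funext e) ▸ this
  have hode : v * D = D + (α : ℂ) * Fv := A4.unique A3
  linear_combination -hode
end inside


lemma hasSum_gru_inside {α : ℝ} (hα1 : 1 ≤ α) (hα2 : α ≤ 2) {u : ℂ} (hu : ‖u‖ < 1) :
    HasSum (fun k : ℕ => cg α k * u ^ k)
      (Complex.exp ((α : ℂ) * Complex.log (1 - u))) := by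
  have slit : ∀ {v : ℂ}, ‖v‖ < 1 → (1 - v) ∈ Complex.slitPlane := by
    intro v hv
    refine Complex.mem_slitPlane_iff.2 (Or.inl ?_)
    have h1 : v.re ≤ ‖v‖ := le_trans (le_abs_self v.re) (Complex.abs_re_le_norm v)
    simp only [Complex.sub_re, Complex.one_re]
    linarith
  have h1v_ne : ∀ {v : ℂ}, ‖v‖ < 1 → (1 - v) ≠ 0 := fun {v} hv =>
    Complex.slitPlane_ne_zero (slit hv)
  -- G has zero derivative on the ball
  have hG : ∀ v ∈ ball (0 : ℂ) 1,
      HasDerivAt (fun w : ℂ => (∑' n : ℕ, cg α n * w ^ n) *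
        Complex.exp (-(α : ℂ) * Complex.log (1 - w))) 0 v := by
    intro v hv
    rw [mem_ball, dist_zero_right] at hv
    set D := ∑' n : ℕ, cg α n * ((n : ℂ) * v ^ (n - 1)) with hDdef
    set Fv := ∑' n : ℕ, cg α n * v ^ n with hFvdef
    set E := Complex.exp (-(α : ℂ) * Complex.log (1 - v)) with hEdef
    have hD : HasDerivAt (fun z : ℂ => ∑' n : ℕ, cg α n * z ^ n) D v := hasDerivAt_F hα1 hα2 hv
    have hlog : HasDerivAt (fun x : ℂ => Complex.log (1 - x)) (-(1 - v)⁻¹) v := by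
      have h1 : HasDerivAt (fun x : ℂ => 1 - x) (-1) v := (hasDerivAt_id v).const_sub 1
      have h2 := (Complex.hasDerivAt_log (slit hv)).comp v h1
      refine h2.congr_deriv ?_
      ring
    have hexp : HasDerivAt (fun x : ℂ => Complex.exp (-(α : ℂ) * Complex.log (1 - x)))
        (E * ((α : ℂ) * (1 - v)⁻¹)) v := by
      have h3 := (hlog.const_mul (-(α : ℂ))).cexp
      refine h3.congr_deriv ?_
      rw [hEdef]
      ring
    have hmul := hD.mul hexp
    refine hmul.congr_deriv ?_
    have h10 : (1 - v) * D + (α : ℂ) * Fv = 0 := ode_F hα1 hα2 hv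
    have hne := h1v_ne hv
    have key : D * E + Fv * (E * ((α : ℂ) * (1 - v)⁻¹))
        = E * (1 - v)⁻¹ * ((1 - v) * D + (α : ℂ) * Fv) := by
      field_simp
    rw [eq_comm, key, h10, mul_zero]
  -- G is constant on the ball
  have hconst : (∑' n : ℕ, cg α n * u ^ n) * Complex.exp (-(α : ℂ) * Complex.log (1 - u))
      = (∑' n : ℕ, cg α n * (0 : ℂ) ^ n) * Complex.exp (-(α : ℂ) * Complex.log (1 - 0)) := by
    apply (convex_ball (0 : ℂ) 1).is_const_of_fderivWithin_eq_zero
      (f := fun w : ℂ => (∑' n : ℕ, cg α n * w ^ n) *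
        Complex.exp (-(α : ℂ) * Complex.log (1 - w)))
      (fun w hw => (hG w hw).differentiableAt.differentiableWithinAt)
      ?_ (by simpa using hu) (by simp)
    intro w hw
    have hFD : HasFDerivAt (fun w : ℂ => (∑' n : ℕ, cg α n * w ^ n) *
        Complex.exp (-(α : ℂ) * Complex.log (1 - w))) (0 : ℂ →L[ℂ] ℂ) w := by
      have := (hG w hw).hasFDerivAt
      refine this.congr_fderiv ?_
      ext
      simp
    rw [fderivWithin_of_isOpen isOpen_ball hw]
    exact hFD.fderiv
  -- compute G 0 = 1
  have hF0 : (∑' n : ℕ, cg α n * (0 : ℂ) ^ n) = 1 := by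
    rw [tsum_eq_single 0 (fun n hn => by simp [zero_pow hn])]
    simp [cg, gru_zero]
  rw [hF0, sub_zero, Complex.log_one, mul_zero, Complex.exp_zero, one_mul] at hconst
  -- conclude
  have hE : Complex.exp (-(α : ℂ) * Complex.log (1 - u))
      = (Complex.exp ((α : ℂ) * Complex.log (1 - u)))⁻¹ := by
    rw [← Complex.exp_neg]
    ring_nf
  rw [hE] at hconst
  have hexp_ne : Complex.exp ((α : ℂ) * Complex.log (1 - u)) ≠ 0 := Complex.exp_ne_zero _
  have hFu : (∑' n : ℕ, cg α n * u ^ n) = Complex.exp ((α : ℂ) * Complex.log (1 - u)) := by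
    field_simp at hconst
    exact hconst
  exact hFu ▸ (summable_cg_pow hα1 hα2 hu).hasSum


lemma hasSum_gru_boundary {α : ℝ} (hα1 : 1 ≤ α) (hα2 : α ≤ 2) {z : ℂ}
    (hz : ‖z‖ = 1) (hre : 0 < (1 - z).re) :
    HasSum (fun k : ℕ => cg α k * z ^ k)
      (Complex.exp ((α : ℂ) * Complex.log (1 - z))) := by
  have hslit : (1 - z) ∈ Complex.slitPlane := Complex.mem_slitPlane_iff.2 (Or.inl hre)
  -- summability at the boundary
  have hsum : Summable (fun k : ℕ => cg α k * z ^ k) := by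
    apply Summable.of_norm_bounded (g := fun k => |gru α k|) (gru_summable_abs hα1 hα2)
    intro k
    rw [norm_mul, norm_pow, hz, one_pow, mul_one, cg, Complex.norm_real, Real.norm_eq_abs]
  -- limit along the radial direction
  have T1 : Tendsto (fun r : ℝ => ∑' k : ℕ, cg α k * ((r : ℂ) * z) ^ k)
      (𝓝[<] (1 : ℝ)) (𝓝 (∑' k : ℕ, cg α k * z ^ k)) := by
    apply tendsto_tsum_of_dominated_convergence (bound := fun k => |gru α k|)
      (gru_summable_abs hα1 hα2)
    · intro k
      have hc : Continuous (fun r : ℝ => cg α k * ((r : ℂ) * z) ^ k) := by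
        continuity
      have := hc.tendsto (1 : ℝ)
      simp only [Complex.ofReal_one, one_mul] at this
      exact this.mono_left nhdsWithin_le_nhds
    · filter_upwards [Ioo_mem_nhdsLT_of_mem (show (1:ℝ) ∈ Set.Ioc (0:ℝ) 1 by norm_num)]
        with r hr k
      rw [norm_mul, norm_pow, norm_mul, hz, mul_one, Complex.norm_real, Real.norm_eq_abs,
        abs_of_pos hr.1, cg, Complex.norm_real, Real.norm_eq_abs]
      have : r ^ k ≤ 1 := pow_le_one₀ hr.1.le hr.2.le
      calc |gru α k| * r ^ k ≤ |gru α k| * 1 := by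
            exact mul_le_mul_of_nonneg_left this (abs_nonneg _)
        _ = |gru α k| := mul_one _
  -- the radial sums equal the exponential expression
  have heq : ∀ᶠ r : ℝ in 𝓝[<] (1 : ℝ),
      (∑' k : ℕ, cg α k * ((r : ℂ) * z) ^ k)
        = Complex.exp ((α : ℂ) * Complex.log (1 - (r : ℂ) * z)) := by
    filter_upwards [Ioo_mem_nhdsLT_of_mem (show (1:ℝ) ∈ Set.Ioc (0:ℝ) 1 by norm_num)]
      with r hr
    have hnorm : ‖(r : ℂ) * z‖ < 1 := by
      rw [norm_mul, hz, mul_one, Complex.norm_real, Real.norm_eq_abs, abs_of_pos hr.1]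
      exact hr.2
    exact (hasSum_gru_inside hα1 hα2 hnorm).tsum_eq
  -- limit of the exponential expression
  have T2 : Tendsto (fun r : ℝ => Complex.exp ((α : ℂ) * Complex.log (1 - (r : ℂ) * z)))
      (𝓝[<] (1 : ℝ)) (𝓝 (Complex.exp ((α : ℂ) * Complex.log (1 - z)))) := by
    have hc1 : Tendsto (fun r : ℝ => 1 - (r : ℂ) * z) (𝓝[<] (1 : ℝ)) (𝓝 (1 - z)) := by
      have : Continuous (fun r : ℝ => 1 - (r : ℂ) * z) := by continuity
      have h := this.tendsto (1 : ℝ)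
      simp only [Complex.ofReal_one, one_mul] at h
      exact h.mono_left nhdsWithin_le_nhds
    have hc2 : ContinuousAt Complex.log (1 - z) := continuousAt_clog hslit
    have hc3 := (hc2.tendsto.comp hc1).const_mul ((α : ℂ))
    exact (Complex.continuous_exp.tendsto _).comp hc3
  have T1' : Tendsto (fun r : ℝ => Complex.exp ((α : ℂ) * Complex.log (1 - (r : ℂ) * z)))
      (𝓝[<] (1 : ℝ)) (𝓝 (∑' k : ℕ, cg α k * z ^ k)) := T1.congr' heq
  have : (∑' k : ℕ, cg α k * z ^ k) = Complex.exp ((α : ℂ) * Complex.log (1 - z)) :=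
    tendsto_nhds_unique T1' T2
  exact this ▸ hsum.hasSum


lemma half_cos (x : ℝ) : Real.cos x = 1 - 2 * Real.sin (x / 2) ^ 2 := by
  have h := Real.cos_two_mul (x / 2)
  have h' := Real.sin_sq_add_cos_sq (x / 2)
  rw [show 2 * (x / 2) = x by ring] at h
  linarith

lemma half_sin (x : ℝ) : Real.sin x = 2 * Real.sin (x / 2) * Real.cos (x / 2) := by
  have h := Real.sin_two_mul (x / 2)
  rw [show 2 * (x / 2) = x by ring] at h
  linarith

lemma sin_half_pos {x : ℝ} (hx0 : 0 < x) (hxpi : x ≤ Real.pi) : 0 < Real.sin (x / 2) :=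
  Real.sin_pos_of_pos_of_lt_pi (by linarith) (by linarith [Real.pi_pos])

lemma one_sub_exp_eq {x : ℝ} (hx0 : 0 < x) (hxpi : x ≤ Real.pi) :
    1 - Complex.exp (-(x : ℂ) * Complex.I)
      = Complex.exp (((Real.log (2 * Real.sin (x / 2)) : ℝ) : ℂ)
          + (((Real.pi - x) / 2 : ℝ) : ℂ) * Complex.I) := by
  have hs : 0 < 2 * Real.sin (x / 2) := by linarith [sin_half_pos hx0 hxpi]
  set s : ℝ := 2 * Real.sin (x / 2) with hsdef
  set θ : ℝ := (Real.pi - x) / 2 with hθdef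
  have hrhs : Complex.exp ((Real.log s : ℂ) + (θ : ℂ) * Complex.I)
      = (s : ℂ) * Complex.exp ((θ : ℂ) * Complex.I) := by
    rw [Complex.exp_add]
    congr 1
    rw [← Complex.ofReal_exp, Real.exp_log hs]
  rw [hrhs]
  apply Complex.ext
  · simp only [Complex.sub_re, Complex.one_re, Complex.re_ofReal_mul,
      Complex.exp_ofReal_mul_I_re]
    have h1 : Complex.exp (-(x : ℂ) * Complex.I) = Complex.exp (((-x : ℝ) : ℂ) * Complex.I) := by
      push_cast; ring_nf
    rw [h1, Complex.exp_ofReal_mul_I_re, Real.cos_neg]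
    have h2 : Real.cos θ = Real.sin (x / 2) := by
      rw [hθdef, show (Real.pi - x) / 2 = Real.pi / 2 - x / 2 by ring, Real.cos_pi_div_two_sub]
    rw [h2, half_cos x, hsdef]
    ring
  · simp only [Complex.sub_im, Complex.one_im]
    have him : ∀ y : ℝ, (Complex.exp ((y : ℂ) * Complex.I)).im = Real.sin y := by
      intro y
      rw [Complex.exp_mul_I]
      simp [Complex.cos_ofReal_im, Complex.sin_ofReal_re]
    have h1 : Complex.exp (-(x : ℂ) * Complex.I) = Complex.exp (((-x : ℝ) : ℂ) * Complex.I) := by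
      push_cast; ring_nf
    rw [h1]
    have h3 : ((s : ℂ) * Complex.exp ((θ : ℂ) * Complex.I)).im
        = s * (Complex.exp ((θ : ℂ) * Complex.I)).im := by
      rw [Complex.mul_im]
      simp
    rw [h3, him, him, Real.sin_neg]
    have h2 : Real.sin θ = Real.cos (x / 2) := by
      rw [hθdef, show (Real.pi - x) / 2 = Real.pi / 2 - x / 2 by ring, Real.sin_pi_div_two_sub]
    rw [h2, half_sin x]
    ring

lemma log_one_sub_exp {x : ℝ} (hx0 : 0 < x) (hxpi : x ≤ Real.pi) :
    Complex.log (1 - Complex.exp (-(x : ℂ) * Complex.I))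
      = ((Real.log (2 * Real.sin (x / 2)) : ℝ) : ℂ)
          + (((Real.pi - x) / 2 : ℝ) : ℂ) * Complex.I := by
  rw [one_sub_exp_eq hx0 hxpi]
  apply Complex.log_exp
  · simp only [Complex.add_im, Complex.ofReal_im, Complex.mul_im, Complex.ofReal_re,
      Complex.I_im, Complex.I_re]
    have := Real.pi_pos
    nlinarith
  · simp only [Complex.add_im, Complex.ofReal_im, Complex.mul_im, Complex.ofReal_re,
      Complex.I_im, Complex.I_re]
    have := Real.pi_pos
    nlinarith

lemma exp_alpha_log {x α : ℝ} (hx0 : 0 < x) (hxpi : x ≤ Real.pi) :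
    Complex.exp ((α : ℂ) * Complex.log (1 - Complex.exp (-(x : ℂ) * Complex.I)))
      = (((2 * Real.sin (x / 2)) ^ α : ℝ) : ℂ)
          * Complex.exp (((α * ((Real.pi - x) / 2) : ℝ) : ℂ) * Complex.I) := by
  have hs : 0 < 2 * Real.sin (x / 2) := by linarith [sin_half_pos hx0 hxpi]
  rw [log_one_sub_exp hx0 hxpi, mul_add, Complex.exp_add]
  congr 1
  · rw [show (α : ℂ) * ((Real.log (2 * Real.sin (x / 2)) : ℝ) : ℂ)
        = ((α * Real.log (2 * Real.sin (x / 2)) : ℝ) : ℂ) by push_cast; ring,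
      ← Complex.ofReal_exp, Real.rpow_def_of_pos hs]
    norm_num [mul_comm]
  · congr 1
    push_cast
    ring


lemma hasSum_w10_complex (α : ℝ) {z L : ℂ}
    (H : HasSum (fun k : ℕ => cg α k * z ^ k) L) :
    HasSum (fun k : ℕ => ((w10 α k : ℝ) : ℂ) * z ^ k)
      ((((α / 2 : ℝ) : ℂ) + (((2 - α) / 2 : ℝ) : ℂ) * z) * L) := by
  set B : ℕ → ℂ := fun k => ((w10 α k : ℝ) : ℂ) * z ^ k with hB
  have Hs : HasSum (fun k : ℕ => cg α (k + 1) * z ^ (k + 1)) (L - cg α 0 * z ^ 0) := by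
    refine (hasSum_nat_add_iff (f := fun k : ℕ => cg α k * z ^ k) 1).2 ?_
    simpa using H
  have C1 : HasSum (fun k : ℕ => ((α / 2 : ℝ) : ℂ) * (cg α (k + 1) * z ^ (k + 1)))
      (((α / 2 : ℝ) : ℂ) * (L - cg α 0 * z ^ 0)) := Hs.mul_left _
  have C2 : HasSum (fun k : ℕ => (((2 - α) / 2 : ℝ) : ℂ) * (cg α k * z ^ (k + 1)))
      ((((2 - α) / 2 : ℝ) : ℂ) * (z * L)) := by
    have := (H.mul_left z).mul_left (((2 - α) / 2 : ℝ) : ℂ)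
    have e : ∀ k : ℕ, (((2 - α) / 2 : ℝ) : ℂ) * (z * (cg α k * z ^ k))
        = (((2 - α) / 2 : ℝ) : ℂ) * (cg α k * z ^ (k + 1)) := by
      intro k
      rw [pow_succ]
      ring
    exact (funext e) ▸ this
  have Hshift : HasSum (fun k : ℕ => B (k + 1))
      ((((α / 2 : ℝ) : ℂ) * (L - cg α 0 * z ^ 0)) + (((2 - α) / 2 : ℝ) : ℂ) * (z * L)) := by
    have := C1.add C2
    have e : ∀ k : ℕ, ((α / 2 : ℝ) : ℂ) * (cg α (k + 1) * z ^ (k + 1))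
        + (((2 - α) / 2 : ℝ) : ℂ) * (cg α k * z ^ (k + 1)) = B (k + 1) := by
      intro k
      simp only [hB, w10, cg]
      push_cast
      ring
    exact (funext e) ▸ this
  have Hfull := (hasSum_nat_add_iff (f := B) 1).1 Hshift
  have hB0 : B 0 = ((α / 2 : ℝ) : ℂ) := by
    simp [hB, w10, gru_zero]
  have hcg0 : cg α 0 = 1 := by simp [cg, gru_zero]
  have : (((α / 2 : ℝ) : ℂ) * (L - cg α 0 * z ^ 0)) + (((2 - α) / 2 : ℝ) : ℂ) * (z * L)
      + ∑ i ∈ range 1, B i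
      = ((((α / 2 : ℝ) : ℂ) + (((2 - α) / 2 : ℝ) : ℂ) * z) * L) := by
    rw [Finset.sum_range_one, hB0, hcg0]
    push_cast
    ring
  rwa [this] at Hfull


theorem w10_generating_function (α : ℝ) (hα1 : 1 ≤ α) (hα2 : α ≤ 2)
    (x : ℝ) (hx0 : 0 ≤ x) (hxpi : x ≤ Real.pi) :
    HasSum (fun k : ℕ => w10 α k * Real.cos (((k : ℝ) - 1) * x))
      ((2 * Real.sin (x / 2)) ^ α *
        (α / 2 * Real.cos (α / 2 * (x - Real.pi) - x)
          + (2 - α) / 2 * Real.cos (α / 2 * (x - Real.pi)))) := by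
  rcases eq_or_lt_of_le hx0 with hx | hx
  · -- x = 0
    subst hx
    have hα0 : α ≠ 0 := by linarith
    rw [show (2 * Real.sin (0 / 2) : ℝ) = 0 by norm_num, Real.zero_rpow hα0, zero_mul]
    have Hg : HasSum (fun k : ℕ => cg α k * (1 : ℂ) ^ k) (0 : ℂ) := by
      have := Complex.hasSum_ofReal.2 (gru_hasSum_zero hα1 hα2)
      simpa [cg] using this
    have HW := hasSum_w10_complex α Hg
    rw [mul_zero] at HW
    have Hre := Complex.hasSum_re HW
    simp only [one_pow, mul_one, Complex.ofReal_re, Complex.zero_re] at Hre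
    have e : (fun k : ℕ => w10 α k * Real.cos (((k : ℝ) - 1) * 0)) = fun k : ℕ => w10 α k := by
      funext k
      simp
    rw [e]
    exact Hre
  · -- 0 < x
    set z : ℂ := Complex.exp (-(x : ℂ) * Complex.I) with hzdef
    have hz : ‖z‖ = 1 := by
      rw [hzdef, Complex.norm_exp]
      simp
    have hzre : z.re = Real.cos x := by
      rw [hzdef, show -(x : ℂ) * Complex.I = ((-x : ℝ) : ℂ) * Complex.I by push_cast; ring,
        Complex.exp_ofReal_mul_I_re, Real.cos_neg]
    have hre : 0 < (1 - z).re := by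
      simp only [Complex.sub_re, Complex.one_re, hzre]
      have hsp := sin_half_pos hx hxpi
      nlinarith [half_cos x]
    have HB := hasSum_gru_boundary hα1 hα2 hz hre
    rw [show Complex.exp ((α : ℂ) * Complex.log (1 - z))
        = (((2 * Real.sin (x / 2)) ^ α : ℝ) : ℂ)
          * Complex.exp (((α * ((Real.pi - x) / 2) : ℝ) : ℂ) * Complex.I) from by
      rw [hzdef]; exact exp_alpha_log hx hxpi] at HB
    have HW := hasSum_w10_complex α HB
    have HE := HW.mul_left (Complex.exp ((x : ℂ) * Complex.I))
    have Hre := Complex.hasSum_re HE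
    -- rewrite the terms
    have hterm : ∀ k : ℕ, (Complex.exp ((x : ℂ) * Complex.I)
        * (((w10 α k : ℝ) : ℂ) * z ^ k)).re = w10 α k * Real.cos (((k : ℝ) - 1) * x) := by
      intro k
      have hzk : z ^ k = Complex.exp ((k : ℂ) * (-(x : ℂ) * Complex.I)) := by
        rw [hzdef, ← Complex.exp_nat_mul]
      have hcomb : Complex.exp ((x : ℂ) * Complex.I)
          * (((w10 α k : ℝ) : ℂ) * z ^ k)
          = ((w10 α k : ℝ) : ℂ) * Complex.exp ((((1 - (k : ℝ)) * x : ℝ) : ℂ) * Complex.I) := by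
        rw [hzk, mul_comm (Complex.exp ((x : ℂ) * Complex.I)), mul_assoc,
          ← Complex.exp_add]
        congr 2
        push_cast
        ring
      rw [hcomb, Complex.re_ofReal_mul, Complex.exp_ofReal_mul_I_re]
      congr 1
      rw [show ((k : ℝ) - 1) * x = -((1 - (k : ℝ)) * x) by ring, Real.cos_neg]
    -- rewrite the value
    set s : ℝ := 2 * Real.sin (x / 2) with hsdef
    set ψ : ℝ := α * ((Real.pi - x) / 2) with hψdef
    have hval : (Complex.exp ((x : ℂ) * Complex.I) * (((((α / 2 : ℝ) : ℂ))
          + (((2 - α) / 2 : ℝ) : ℂ) * z) * (((s ^ α : ℝ) : ℂ)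
          * Complex.exp (((ψ : ℝ) : ℂ) * Complex.I)))).re
        = s ^ α * (α / 2 * Real.cos (α / 2 * (x - Real.pi) - x)
          + (2 - α) / 2 * Real.cos (α / 2 * (x - Real.pi))) := by
      have e1 : Complex.exp ((x : ℂ) * Complex.I) * Complex.exp (((ψ : ℝ) : ℂ) * Complex.I)
          = Complex.exp (((x + ψ : ℝ) : ℂ) * Complex.I) := by
        rw [← Complex.exp_add]
        congr 1
        push_cast
        ring
      have e2 : Complex.exp ((x : ℂ) * Complex.I) * z = 1 := by
        rw [hzdef, ← Complex.exp_add, show (x : ℂ) * Complex.I + -(x : ℂ) * Complex.I = 0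
          by ring, Complex.exp_zero]
      have hexpand : Complex.exp ((x : ℂ) * Complex.I) * (((((α / 2 : ℝ) : ℂ))
            + (((2 - α) / 2 : ℝ) : ℂ) * z) * (((s ^ α : ℝ) : ℂ)
            * Complex.exp (((ψ : ℝ) : ℂ) * Complex.I)))
          = (((s ^ α * (α / 2) : ℝ) : ℂ)) * Complex.exp (((x + ψ : ℝ) : ℂ) * Complex.I)
            + (((s ^ α * ((2 - α) / 2) : ℝ) : ℂ))
              * Complex.exp (((ψ : ℝ) : ℂ) * Complex.I) := by
        push_cast
        push_cast at e1
        linear_combination (((s ^ α : ℝ) : ℂ) * ((α : ℂ) / 2)) * e1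
          + (((s ^ α : ℝ) : ℂ) * (((2 : ℂ) - α) / 2)
            * Complex.exp (((ψ : ℝ) : ℂ) * Complex.I)) * e2
      rw [hexpand, Complex.add_re, Complex.re_ofReal_mul, Complex.re_ofReal_mul,
        Complex.exp_ofReal_mul_I_re, Complex.exp_ofReal_mul_I_re]
      have c1 : Real.cos (x + ψ) = Real.cos (α / 2 * (x - Real.pi) - x) := by
        rw [show α / 2 * (x - Real.pi) - x = -(x + ψ) by rw [hψdef]; ring, Real.cos_neg]
      have c2 : Real.cos ψ = Real.cos (α / 2 * (x - Real.pi)) := by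
        rw [show α / 2 * (x - Real.pi) = -ψ by rw [hψdef]; ring, Real.cos_neg]
      rw [c1, c2]
      ring
    have efun : (fun k : ℕ => w10 α k * Real.cos (((k : ℝ) - 1) * x))
        = fun k : ℕ => (Complex.exp ((x : ℂ) * Complex.I)
            * (((w10 α k : ℝ) : ℂ) * z ^ k)).re := by
      funext k
      rw [hterm k]
    rw [efun, ← hval]
    exact Hre
end
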